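/- arXiv:1901.01101 — 3 statements merged into one kernel-verified Lean document; each statement's English description precedes it below -/
import Mathlib

section
/- For α ∈ (0,1) there is a constant c(α) such that for every k ≥ 1 and every integer p ≥ M_k, ∫_{G_m²} |∑_{i=1}^{M_k} A_{p−i}^{−α−1} D_i(u) D_i(v)| dμ(u,v) ≤ c(α). -/
open MeasureTheory Finset
open scoped ENNReal NNReal

noncomputable section

/-- Discrete measurable structure on each finite cyclic factor. -/
instance (n : ℕ) : MeasurableSpace (ZMod n) := ⊤

/-- The Vilenkin group determined by the generating sequence `m`. -/
abbrev Vil (m : ℕ → ℕ) : Type := ∀ k, ZMod (m k)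

/-- Generalized numbers `M_k`. -/
def Mgen (m : ℕ → ℕ) : ℕ → ℕ
  | 0 => 1
  | k + 1 => m k * Mgen m k

/-- `j`-th digit of `n` in the generalized number system. -/
def vdigit (m : ℕ → ℕ) (n j : ℕ) : ℕ := (n / Mgen m j) % m j

/-- Vilenkin functions `ψ_n = ∏ r_k^{n_k}`. -/
def vpsi (m : ℕ → ℕ) (n : ℕ) (x : Vil m) : ℂ :=
  ∏ k ∈ Finset.range (n + 1),
    Complex.exp (2 * Real.pi * Complex.I * ((x k).val : ℂ) / (m k : ℂ)) ^ vdigit m n k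

/-- Vilenkin–Dirichlet kernels `D_n = ∑_{k<n} ψ_k`. -/
def vD (m : ℕ → ℕ) (n : ℕ) (x : Vil m) : ℂ := ∑ k ∈ Finset.range n, vpsi m k x

/-- Cesàro numbers `A_n^α = ∏_{j=1}^n (α+j) / n!` (so `A_0^α = 1`). -/
def ces (α : ℝ) (n : ℕ) : ℝ := (∏ j ∈ Finset.range n, (α + j + 1)) / n.factorial

/-- The normalized "absolute value" `|u| = ∑_j u_j / M_{j+1}` on a Vilenkin group. -/
def vabs (m : ℕ → ℕ) (u : Vil m) : ℝ := ∑' j, ((u j).val : ℝ) / Mgen m (j + 1)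

/-- Standard subgroup `I_n = {y : y_0 = ⋯ = y_{n-1} = 0}`. -/
def In (m : ℕ → ℕ) (n : ℕ) : Set (Vil m) := {u | ∀ j < n, u j = 0}

namespace NCKB

variable {m : ℕ → ℕ}

lemma Mgen_succ (m : ℕ → ℕ) (j : ℕ) : Mgen m (j + 1) = m j * Mgen m j := rfl

lemma Mgen_pos (hm : ∀ k, 2 ≤ m k) (j : ℕ) : 0 < Mgen m j := by
  induction j with
  | zero => exact Nat.one_pos
  | succ j ih => exact Nat.mul_pos (by have := hm j; omega) ih

lemma two_pow_le_Mgen (hm : ∀ k, 2 ≤ m k) (j : ℕ) : 2 ^ j ≤ Mgen m j := by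
  induction j with
  | zero => simp [Mgen]
  | succ j ih =>
    rw [Mgen_succ, pow_succ, mul_comm (2 ^ j) 2]
    exact Nat.mul_le_mul (hm j) ih

lemma Mgen_mono (hm : ∀ k, 2 ≤ m k) {i j : ℕ} (h : i ≤ j) : Mgen m i ≤ Mgen m j := by
  induction j with
  | zero => simpa [Nat.le_zero.mp h] using le_refl _
  | succ j ih =>
    rcases Nat.lt_or_ge i (j+1) with h' | h'
    · calc Mgen m i ≤ Mgen m j := ih (by omega)
        _ ≤ m j * Mgen m j := Nat.le_mul_of_pos_left _ (by have := hm j; omega)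
        _ = Mgen m (j+1) := rfl
    · have : i = j + 1 := by omega
      simp [this]

lemma Mgen_dvd (m : ℕ → ℕ) {i j : ℕ} (h : i ≤ j) : Mgen m i ∣ Mgen m j := by
  induction j with
  | zero => simpa [Nat.le_zero.mp h] using dvd_refl _
  | succ j ih =>
    rcases Nat.lt_or_ge i (j+1) with h' | h'
    · exact (ih (by omega)).mul_left _
    · have : i = j + 1 := by omega
      simp [this]

lemma Mgen_mul_dvd (m : ℕ → ℕ) {i j : ℕ} (h : i < j) :
    (m i * Mgen m i) ∣ Mgen m j := Mgen_dvd m (by omega : i + 1 ≤ j)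

lemma lt_Mgen_self (hm : ∀ k, 2 ≤ m k) (t : ℕ) : t < Mgen m (t + 1) :=
  lt_of_lt_of_le (Nat.lt_two_pow_self (n := t)) (le_trans (two_pow_le_Mgen hm _)
    (Mgen_mono hm (by omega)))

/-- The `i`-th Rademacher-type generator evaluated at `u`. -/
def rho (m : ℕ → ℕ) (i : ℕ) (u : Vil m) : ℂ :=
  Complex.exp (2 * Real.pi * Complex.I * ((u i).val : ℂ) / (m i : ℂ))

lemma rho_eq (m : ℕ → ℕ) (i : ℕ) (u : Vil m) :
    rho m i u = Complex.exp ((((2 * Real.pi * (u i).val / m i : ℝ)) : ℂ) * Complex.I) := by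
  unfold rho
  congr 1
  push_cast
  ring

lemma abs_rho (m : ℕ → ℕ) (i : ℕ) (u : Vil m) : ‖rho m i u‖ = 1 := by
  rw [rho_eq]; exact Complex.norm_exp_ofReal_mul_I _

lemma norm_rho (m : ℕ → ℕ) (i : ℕ) (u : Vil m) : ‖rho m i u‖ = 1 := abs_rho m i u

lemma rho_ne_zero (m : ℕ → ℕ) (i : ℕ) (u : Vil m) : rho m i u ≠ 0 := Complex.exp_ne_zero _

lemma rho_pow_m (hm : ∀ k, 2 ≤ m k) (i : ℕ) (u : Vil m) : rho m i u ^ (m i) = 1 := by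
  have hmi : (m i : ℂ) ≠ 0 := by
    have : m i ≠ 0 := by have := hm i; omega
    exact_mod_cast this
  rw [rho, ← Complex.exp_nat_mul]
  have : (m i : ℂ) * (2 * Real.pi * Complex.I * ((u i).val : ℂ) / (m i : ℂ))
      = (((u i).val : ℤ) : ℂ) * (2 * Real.pi * Complex.I) := by
    field_simp
    push_cast
    ring
  rw [this, Complex.exp_int_mul_two_pi_mul_I]

lemma rho_eq_one_iff (hm : ∀ k, 2 ≤ m k) (i : ℕ) (u : Vil m) :
    rho m i u = 1 ↔ (u i).val = 0 := by
  have hmi : (0:ℝ) < m i := by have := hm i; positivity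
  constructor
  · intro h
    rw [rho_eq, Complex.exp_eq_one_iff] at h
    obtain ⟨n, hn⟩ := h
    have hI : ((2 * Real.pi * (u i).val / m i : ℝ) : ℂ) = ((n * (2 * Real.pi) : ℝ) : ℂ) := by
      have hI2 : ((2 * Real.pi * (u i).val / m i : ℝ) : ℂ) * Complex.I
          = ((n * (2 * Real.pi) : ℝ) : ℂ) * Complex.I := by
        rw [hn]; push_cast; ring
      exact mul_right_cancel₀ Complex.I_ne_zero hI2
    have hr : (2 * Real.pi * (u i).val / m i : ℝ) = n * (2 * Real.pi) := by
      exact_mod_cast hI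
    have hpi : (0:ℝ) < Real.pi := Real.pi_pos
    have hval : ((u i).val : ℝ) = n * m i := by
      field_simp at hr
      nlinarith [hr]
    have hvlt : (u i).val < m i := by
      haveI : NeZero (m i) := ⟨by have := hm i; omega⟩
      exact ZMod.val_lt _
    have hn0 : (0:ℝ) ≤ ((u i).val : ℝ) := by positivity
    have hvlt' : ((u i).val : ℝ) < m i := by exact_mod_cast hvlt
    have : (0:ℤ) ≤ n := by
      by_contra hneg
      push_neg at hneg
      have : (n:ℝ) ≤ -1 := by exact_mod_cast (by omega : n ≤ -1)
      nlinarith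
    have : n = 0 := by
      by_contra hne
      have : (1:ℤ) ≤ n := by omega
      have : (1:ℝ) ≤ (n:ℝ) := by exact_mod_cast this
      nlinarith
    rw [this] at hval
    have hval' : ((u i).val : ℝ) = 0 := by rw [hval]; simp
    exact_mod_cast hval'
  · intro h
    rw [rho, h]
    simp

end NCKB

-- appended to part1
namespace NCKB
variable {m : ℕ → ℕ}

lemma rho_pow_div (hm : ∀ k, 2 ≤ m k) (i t : ℕ) (u : Vil m) :
    rho m i u ^ (t / Mgen m i) = rho m i u ^ (vdigit m t i) := by
  conv_lhs => rw [show t / Mgen m i = m i * (t / Mgen m i / m i) + (t / Mgen m i) % m i from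
    (Nat.div_add_mod _ _).symm]
  rw [pow_add, pow_mul, rho_pow_m hm, one_pow, one_mul]
  rfl

lemma vdigit_eq_zero_of_lt (hm : ∀ k, 2 ≤ m k) {t i : ℕ} (h : t < Mgen m i) :
    vdigit m t i = 0 := by
  unfold vdigit
  rw [Nat.div_eq_of_lt h]
  simp

/-- `ψ_t` as a product over any window `J` with `t < M_J`. -/
lemma vpsi_eq_prod (hm : ∀ k, 2 ≤ m k) {J t : ℕ} (ht : t < Mgen m J) (u : Vil m) :
    vpsi m t u = ∏ i ∈ range J, rho m i u ^ (vdigit m t i) := by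
  have key : ∀ L, t + 1 ≤ L →
      vpsi m t u = ∏ i ∈ range L, rho m i u ^ (vdigit m t i) := by
    intro L hL
    unfold vpsi
    rw [Finset.prod_subset (Finset.range_subset_range.mpr hL)]
    · rfl
    · intro x _ hx
      rw [Finset.mem_range, not_lt] at hx
      have : t < Mgen m x := lt_of_lt_of_le (lt_Mgen_self hm t) (Mgen_mono hm hx)
      rw [vdigit_eq_zero_of_lt hm this, pow_zero]
  rcases Nat.le_total (t+1) J with h | h
  · exact key J h
  · rw [key (t+1) le_rfl, Finset.prod_subset (Finset.range_subset_range.mpr h)]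
    intro x _ hx
    rw [Finset.mem_range, not_lt] at hx
    have : t < Mgen m x := lt_of_lt_of_le ht (Mgen_mono hm hx)
    rw [vdigit_eq_zero_of_lt hm this, pow_zero]

/-- `ψ_t` with plain floor-division exponents. -/
lemma vpsi_eq_prod_div (hm : ∀ k, 2 ≤ m k) {J t : ℕ} (ht : t < Mgen m J) (u : Vil m) :
    vpsi m t u = ∏ i ∈ range J, rho m i u ^ (t / Mgen m i) := by
  rw [vpsi_eq_prod hm ht]
  exact Finset.prod_congr rfl fun i _ => (rho_pow_div hm i t u).symm

lemma vpsi_zero (m : ℕ → ℕ) (u : Vil m) : vpsi m 0 u = 1 := by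
  unfold vpsi vdigit
  simp

lemma norm_vpsi (m : ℕ → ℕ) (t : ℕ) (u : Vil m) : ‖vpsi m t u‖ = 1 := by
  unfold vpsi
  rw [norm_prod]
  apply Finset.prod_eq_one
  intro k _
  rw [norm_pow]
  have : ‖Complex.exp (2 * Real.pi * Complex.I * ((u k).val : ℂ) / (m k : ℂ))‖ = 1 :=
    norm_rho m k u
  rw [this, one_pow]

lemma nnnorm_vpsi (m : ℕ → ℕ) (t : ℕ) (u : Vil m) : ‖vpsi m t u‖₊ = 1 := by
  ext
  simpa using norm_vpsi m t u

/-- Multiplicativity across a digit split. -/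
lemma vpsi_add (hm : ∀ k, 2 ≤ m k) {j x s : ℕ} (hx : x < Mgen m j) (hs : s < m j)
    (u : Vil m) :
    vpsi m (x + s * Mgen m j) u = vpsi m x u * rho m j u ^ s := by
  have hMj : 0 < Mgen m j := Mgen_pos hm j
  have ht : x + s * Mgen m j < Mgen m (j+1) := by
    rw [Mgen_succ]
    calc x + s * Mgen m j < Mgen m j + s * Mgen m j := by omega
      _ = (s + 1) * Mgen m j := by ring
      _ ≤ m j * Mgen m j := Nat.mul_le_mul_right _ (by omega)
  rw [vpsi_eq_prod_div hm ht u, Finset.prod_range_succ]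
  have hdivj : (x + s * Mgen m j) / Mgen m j = s := by
    rw [Nat.add_mul_div_right _ _ hMj, Nat.div_eq_of_lt hx]
    omega
  rw [hdivj]
  congr 1
  rw [vpsi_eq_prod_div hm hx u]
  apply Finset.prod_congr rfl
  intro i hi
  rw [Finset.mem_range] at hi
  obtain ⟨c, hc⟩ := Mgen_mul_dvd m hi
  have hMi : 0 < Mgen m i := Mgen_pos hm i
  have hdvd : Mgen m i ∣ s * Mgen m j := (Mgen_dvd m (le_of_lt hi)).mul_left s
  have hdiv : (x + s * Mgen m j) / Mgen m i = x / Mgen m i + s * (Mgen m j / Mgen m i) := by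
    rw [Nat.add_div_of_dvd_left hdvd, Nat.mul_div_assoc s (Mgen_dvd m (le_of_lt hi))]
  rw [hdiv, pow_add]
  have hMdiv : Mgen m j / Mgen m i = m i * c := by
    rw [hc, mul_comm (m i) (Mgen m i), mul_assoc]
    rw [Nat.mul_div_cancel_left _ hMi]
  have : rho m i u ^ (s * (Mgen m j / Mgen m i)) = 1 := by
    rw [hMdiv, show s * (m i * c) = m i * (s * c) by ring, pow_mul, rho_pow_m hm, one_pow]
  rw [this, mul_one]

end NCKB

namespace NCKB
variable {m : ℕ → ℕ}

lemma vD_zero (m : ℕ → ℕ) (u : Vil m) : vD m 0 u = 0 := by simp [vD]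

/-- Sum of `ψ_a` over full blocks. -/
lemma sum_psi_mul (hm : ∀ k, 2 ≤ m k) {j s : ℕ} (hs : s ≤ m j) (u : Vil m) :
    ∑ a ∈ range (s * Mgen m j), vpsi m a u
      = (∑ σ ∈ range s, rho m j u ^ σ) * vD m (Mgen m j) u := by
  induction s with
  | zero => simp
  | succ s ih =>
    have hs' : s ≤ m j := by omega
    have h1 : s * Mgen m j ≤ (s+1) * Mgen m j := Nat.mul_le_mul_right _ (by omega)
    rw [Finset.range_eq_Ico,
      ← Finset.sum_Ico_consecutive (fun a => vpsi m a u) (Nat.zero_le _) h1,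
      ← Finset.range_eq_Ico, ih hs', Finset.sum_Ico_eq_sum_range]
    have : ∀ k ∈ range ((s+1) * Mgen m j - s * Mgen m j),
        vpsi m (s * Mgen m j + k) u = rho m j u ^ s * vpsi m k u := by
      intro k hk
      rw [Finset.mem_range] at hk
      have hk' : k < Mgen m j := by
        have : (s+1) * Mgen m j - s * Mgen m j = Mgen m j := by
          rw [Nat.succ_mul]; omega
        omega
      rw [add_comm, vpsi_add hm hk' (by omega) u, mul_comm]
    rw [Finset.sum_congr rfl this, ← Finset.mul_sum]
    have hM : (s+1) * Mgen m j - s * Mgen m j = Mgen m j := by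
      rw [Nat.succ_mul]; omega
    rw [hM, Finset.sum_range_succ, add_mul]
    rfl

/-- Splitting of a Dirichlet kernel along the top block at level `j`. -/
lemma vD_split (hm : ∀ k, 2 ≤ m k) {j t : ℕ} (ht : t ≤ Mgen m (j+1)) (u : Vil m) :
    vD m t u = (∑ σ ∈ range (t / Mgen m j), rho m j u ^ σ) * vD m (Mgen m j) u
      + rho m j u ^ (t / Mgen m j) * vD m (t % Mgen m j) u := by
  have hMj : 0 < Mgen m j := Mgen_pos hm j
  set s := t / Mgen m j with hs
  set x := t % Mgen m j with hx
  have hts : t = s * Mgen m j + x := by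
    rw [hs, hx, mul_comm]; exact (Nat.div_add_mod t (Mgen m j)).symm
  have hsm : s ≤ m j := by
    have : t / Mgen m j ≤ Mgen m (j+1) / Mgen m j := Nat.div_le_div_right ht
    rwa [Mgen_succ, Nat.mul_div_cancel _ hMj] at this
  have hxM : x < Mgen m j := Nat.mod_lt _ hMj
  have hsx : x = 0 ∨ s < m j := by
    by_contra h
    push_neg at h
    obtain ⟨h1, h2⟩ := h
    have : s = m j := by omega
    rw [hts, this] at ht
    rw [← Mgen_succ] at ht
    omega
  unfold vD
  conv_lhs => rw [hts]
  rw [Finset.range_eq_Ico,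
    ← Finset.sum_Ico_consecutive (fun a => vpsi m a u) (Nat.zero_le (s * Mgen m j))
      (by omega), ← Finset.range_eq_Ico, sum_psi_mul hm hsm u,
    Finset.sum_Ico_eq_sum_range]
  have hred : s * Mgen m j + x - s * Mgen m j = x := by omega
  rw [hred]
  congr 1
  rcases hsx with h0 | hlt
  · simp [h0]
  · have : ∀ k ∈ range x, vpsi m (s * Mgen m j + k) u = rho m j u ^ s * vpsi m k u := by
      intro k hk
      rw [Finset.mem_range] at hk
      rw [add_comm, vpsi_add hm (by omega) hlt u, mul_comm]
    rw [Finset.sum_congr rfl this, ← Finset.mul_sum]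

/-- `D_{M_j}` as a product of local geometric sums. -/
lemma vD_Mgen (hm : ∀ k, 2 ≤ m k) (j : ℕ) (u : Vil m) :
    vD m (Mgen m j) u = ∏ i ∈ range j, (∑ σ ∈ range (m i), rho m i u ^ σ) := by
  induction j with
  | zero =>
    simp [vD, vpsi_zero, Mgen]
  | succ j ih =>
    have : vD m (Mgen m (j+1)) u
        = ∑ a ∈ range (m j * Mgen m j), vpsi m a u := rfl
    rw [this, sum_psi_mul hm le_rfl u, ih, Finset.prod_range_succ, mul_comm]

lemma sum_rho_pow (hm : ∀ k, 2 ≤ m k) (i : ℕ) (u : Vil m) :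
    (∑ σ ∈ range (m i), rho m i u ^ σ) = if (u i).val = 0 then (m i : ℂ) else 0 := by
  by_cases h : (u i).val = 0
  · rw [if_pos h]
    have : rho m i u = 1 := (rho_eq_one_iff hm i u).mpr h
    simp [this]
  · rw [if_neg h]
    have hne : rho m i u ≠ 1 := fun hc => h ((rho_eq_one_iff hm i u).mp hc)
    rw [geom_sum_eq hne, rho_pow_m hm]
    simp

lemma Mgen_eq_prod (m : ℕ → ℕ) (j : ℕ) : Mgen m j = ∏ i ∈ range j, m i := by
  induction j with
  | zero => rfl
  | succ j ih => rw [Finset.prod_range_succ, Mgen_succ, ih, mul_comm]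

lemma vD_Mgen_eq (hm : ∀ k, 2 ≤ m k) (j : ℕ) (u : Vil m) :
    vD m (Mgen m j) u = if (∀ i < j, (u i).val = 0) then (Mgen m j : ℂ) else 0 := by
  rw [vD_Mgen hm j u, Finset.prod_congr rfl (fun i _ => sum_rho_pow hm i u)]
  by_cases h : ∀ i < j, (u i).val = 0
  · rw [if_pos h]
    rw [Finset.prod_congr rfl (fun i hi => if_pos (h i (Finset.mem_range.mp hi)))]
    rw [Mgen_eq_prod]
    push_cast
    rfl
  · rw [if_neg h]
    push_neg at h
    obtain ⟨i, hij, hi⟩ := h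
    apply Finset.prod_eq_zero (Finset.mem_range.mpr hij)
    rw [if_neg hi]

/-- Reflection: `ψ_{M_n - 1 - c} = ψ_{M_n-1} ⋅ conj ψ_c`. -/
lemma vpsi_reflect (hm : ∀ k, 2 ≤ m k) :
    ∀ n, ∀ c < Mgen m n, ∀ u : Vil m,
      vpsi m (Mgen m n - 1 - c) u
        = vpsi m (Mgen m n - 1) u * (starRingEnd ℂ) (vpsi m c u) := by
  intro n
  induction n with
  | zero =>
    intro c hc u
    have : c = 0 := by simpa [Mgen] using hc
    subst this
    simp [Mgen, vpsi_zero]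
  | succ n ih =>
    intro c hc u
    have hM : 0 < Mgen m n := Mgen_pos hm n
    have hmn := hm n
    set s := c / Mgen m n with hs
    set x := c % Mgen m n with hxd
    have hcsx : c = x + s * Mgen m n := by
      rw [hxd, hs, mul_comm (c / Mgen m n) (Mgen m n)]
      exact (Nat.mod_add_div c (Mgen m n)).symm
    have hxM : x < Mgen m n := Nat.mod_lt _ hM
    have hsm : s < m n := by
      rw [hs, Nat.div_lt_iff_lt_mul hM]
      exact lt_of_lt_of_eq hc rfl
    have hsM : s * Mgen m n + Mgen m n ≤ m n * Mgen m n := by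
      calc s * Mgen m n + Mgen m n = (s + 1) * Mgen m n := by ring
        _ ≤ m n * Mgen m n := Nat.mul_le_mul_right _ (by omega)
    have hP : Mgen m (n+1) = m n * Mgen m n := rfl
    have e1 : (m n - 1 - s) * Mgen m n = m n * Mgen m n - Mgen m n - s * Mgen m n := by
      rw [Nat.sub_mul, Nat.sub_mul, one_mul]
    have eIdx : Mgen m (n+1) - 1 - c = (Mgen m n - 1 - x) + (m n - 1 - s) * Mgen m n := by
      rw [e1, hP]
      omega
    have eTop : Mgen m (n+1) - 1 = (Mgen m n - 1) + (m n - 1) * Mgen m n := by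
      have : (m n - 1) * Mgen m n = m n * Mgen m n - Mgen m n := by
        rw [Nat.sub_mul, one_mul]
      rw [this, hP]
      omega
    have hxx : Mgen m n - 1 - x < Mgen m n := by omega
    have hss : m n - 1 - s < m n := lt_of_le_of_lt (Nat.sub_le _ _) (by omega)
    have h1M : Mgen m n - 1 < Mgen m n := by omega
    have hm1 : m n - 1 < m n := by omega
    rw [eIdx, vpsi_add hm hxx hss u, ih x hxM u, eTop, vpsi_add hm h1M hm1 u]
    conv_rhs => rw [hcsx, vpsi_add hm hxM hsm u]
    rw [map_mul]
    have hz := rho_ne_zero m n u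
    have hcc : rho m n u * (starRingEnd ℂ) (rho m n u) = 1 := by
      rw [Complex.mul_conj, Complex.normSq_eq_norm_sq, abs_rho]
      norm_num
    have key : rho m n u ^ (m n - 1 - s)
        = rho m n u ^ (m n - 1) * (starRingEnd ℂ) (rho m n u ^ s) := by
      apply mul_right_cancel₀ (pow_ne_zero s hz)
      rw [← pow_add]
      have : m n - 1 - s + s = m n - 1 := by omega
      rw [this, map_pow, mul_assoc, ← mul_pow, mul_comm ((starRingEnd ℂ) (rho m n u)) (rho m n u),
        hcc, one_pow, mul_one]
    rw [key]
    ring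
end NCKB

namespace NCKB
variable {m : ℕ → ℕ}

/-- The tail `∑_{a=N-r}^{N-1} ψ_a` has the same modulus as `D_r`. -/
lemma nnnorm_tail (hm : ∀ k, 2 ≤ m k) {n r : ℕ} (hr : r ≤ Mgen m n) (u : Vil m) :
    ‖∑ a ∈ Finset.Ico (Mgen m n - r) (Mgen m n), vpsi m a u‖₊ = ‖vD m r u‖₊ := by
  set N := Mgen m n with hN
  have hNpos : 0 < N := Mgen_pos hm n
  have key : ∑ a ∈ Finset.Ico (N - r) N, vpsi m a u
      = vpsi m (N - 1) u * (starRingEnd ℂ) (vD m r u) := by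
    have hbij : ∑ a ∈ Finset.Ico (N - r) N, vpsi m a u
        = ∑ c ∈ range r, vpsi m (N - 1 - c) u := by
      apply Finset.sum_nbij' (fun a => N - 1 - a) (fun c => N - 1 - c)
      · intro a ha
        rw [Finset.mem_Ico] at ha
        rw [Finset.mem_range]
        omega
      · intro c hc
        rw [Finset.mem_range] at hc
        rw [Finset.mem_Ico]
        omega
      · intro a ha
        rw [Finset.mem_Ico] at ha
        omega
      · intro c hc
        rw [Finset.mem_range] at hc
        omega
      · intro a ha
        rw [Finset.mem_Ico] at ha
        congr 1
        omega
    rw [hbij]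
    have : ∀ c ∈ range r, vpsi m (N - 1 - c) u
        = vpsi m (N - 1) u * (starRingEnd ℂ) (vpsi m c u) := by
      intro c hc
      rw [Finset.mem_range] at hc
      exact vpsi_reflect hm n c (by omega) u
    rw [Finset.sum_congr rfl this, ← Finset.mul_sum, ← map_sum]
    rfl
  rw [key, nnnorm_mul, RCLike.nnnorm_conj]
  rw [nnnorm_vpsi, one_mul]

/-- Key pointwise bound: `‖D_i‖ ≤ ‖D_N‖ + ‖D_{N-i}‖`. -/
lemma nnnorm_vD_le_reflect (hm : ∀ k, 2 ≤ m k) {n i : ℕ} (hi : i ≤ Mgen m n) (u : Vil m) :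
    ‖vD m i u‖₊ ≤ ‖vD m (Mgen m n) u‖₊ + ‖vD m (Mgen m n - i) u‖₊ := by
  set N := Mgen m n with hN
  have hsplit : vD m N u = vD m i u + ∑ a ∈ Finset.Ico i N, vpsi m a u := by
    unfold vD
    rw [Finset.range_eq_Ico, Finset.range_eq_Ico]
    exact (Finset.sum_Ico_consecutive (fun a => vpsi m a u) (Nat.zero_le i) hi).symm
  have : vD m i u = vD m N u - ∑ a ∈ Finset.Ico i N, vpsi m a u := by
    rw [hsplit]; ring
  rw [this]
  calc ‖vD m N u - ∑ a ∈ Finset.Ico i N, vpsi m a u‖₊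
      ≤ ‖vD m N u‖₊ + ‖∑ a ∈ Finset.Ico i N, vpsi m a u‖₊ := nnnorm_sub_le _ _
    _ = ‖vD m N u‖₊ + ‖vD m (N - i) u‖₊ := by
        congr 1
        have : Finset.Ico i N = Finset.Ico (N - (N - i)) N := by
          congr 1
          omega
        rw [this]
        exact nnnorm_tail hm (by omega) u

/- Measurability -/
lemma measurable_of_zmod {n : ℕ} {γ : Type*} [MeasurableSpace γ] (f : ZMod n → γ) :
    Measurable f := fun _ _ => MeasurableSpace.measurableSet_top

lemma measurable_vpsi (m : ℕ → ℕ) (t : ℕ) : Measurable (vpsi m t) := by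
  unfold vpsi
  apply Finset.measurable_prod
  intro k _
  exact (measurable_of_zmod
    (fun x : ZMod (m k) =>
      Complex.exp (2 * Real.pi * Complex.I * (x.val : ℂ) / (m k : ℂ)) ^ vdigit m t k)).comp
    (measurable_pi_apply k)

lemma measurable_vD (m : ℕ → ℕ) (t : ℕ) : Measurable (vD m t) := by
  unfold vD
  exact Finset.measurable_sum _ fun k _ => measurable_vpsi m k

instance : MeasurableAdd (Vil m) := by
  constructor
  · intro c
    exact measurable_pi_lambda _ fun i =>
      (measurable_of_zmod (fun x : ZMod (m i) => c i + x)).comp (measurable_pi_apply i)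
  · intro c
    exact measurable_pi_lambda _ fun i =>
      (measurable_of_zmod (fun x : ZMod (m i) => x + c i)).comp (measurable_pi_apply i)

lemma measurableSet_In (m : ℕ → ℕ) (j : ℕ) : MeasurableSet (In m j) := by
  have : In m j = ⋂ (i : ℕ) (_ : i < j), (fun u : Vil m => u i) ⁻¹' {0} := by
    ext u
    simp [In]
  rw [this]
  exact MeasurableSet.iInter fun i => MeasurableSet.iInter fun _ =>
    (measurable_pi_apply i) MeasurableSpace.measurableSet_top

lemma measure_In (hm : ∀ k, 2 ≤ m k) (μ : Measure (Vil m)) [IsProbabilityMeasure μ]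
    [μ.IsAddLeftInvariant] (j : ℕ) :
    (Mgen m j : ℝ≥0∞) * μ (In m j) = 1 := by
  induction j with
  | zero =>
    have : In m 0 = Set.univ := by
      ext u; simp [In]
    simp [this, Mgen]
  | succ j ih =>
    haveI : NeZero (m j) := ⟨by have := hm j; omega⟩
    have hstep : μ (In m j) = (m j : ℝ≥0∞) * μ (In m (j+1)) := by
      have hUnion : In m j = ⋃ s : ZMod (m j),
          (fun u : Vil m => Function.update (0 : Vil m) j (-s) + u) ⁻¹' In m (j+1) := by
        ext u
        simp only [Set.mem_iUnion, Set.mem_preimage, In, Set.mem_setOf_eq]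
        constructor
        · intro h
          refine ⟨u j, fun i hi => ?_⟩
          rcases Nat.lt_or_ge i j with h' | h'
          · have : Function.update (0 : Vil m) j (-(u j)) i = 0 := by
              rw [Function.update_of_ne (by omega)]
              rfl
            simp only [Pi.add_apply, this, zero_add]
            exact h i h'
          · have hij : i = j := by omega
            subst hij
            simp only [Pi.add_apply, Function.update_self]
            ring
        · rintro ⟨s, hs⟩ i hi
          have := hs i (by omega)
          rcases Nat.lt_or_ge i j with h' | h'
          · have hupd : Function.update (0 : Vil m) j (-s) i = 0 := by
              rw [Function.update_of_ne (by omega)]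
              rfl
            simpa [hupd] using this
          · exfalso; omega
      rw [hUnion, measure_iUnion]
      · rw [tsum_fintype]
        have : ∀ s : ZMod (m j),
            μ ((fun u : Vil m => Function.update (0 : Vil m) j (-s) + u) ⁻¹' In m (j+1))
              = μ (In m (j+1)) := fun s =>
          measure_preimage_add μ _ _
        rw [Finset.sum_congr rfl (fun s _ => this s), Finset.sum_const]
        simp [ZMod.card]
      · intro s t hst
        simp only [Function.onFun, Set.disjoint_left]
        intro u hu hu'
        apply hst
        have h1 := hu j (by omega)
        have h2 := hu' j (by omega)
        simp only [Pi.add_apply, Function.update_self] at h1 h2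
        have : -s + u j = 0 := h1
        have h2' : -t + u j = 0 := h2
        have : s = u j := by linear_combination -this
        have h2'' : t = u j := by linear_combination -h2'
        rw [this, h2'']
      · intro s
        exact (measurable_const_add _) (measurableSet_In m (j+1))
    calc (Mgen m (j+1) : ℝ≥0∞) * μ (In m (j+1))
        = (Mgen m j : ℝ≥0∞) * ((m j : ℝ≥0∞) * μ (In m (j+1))) := by
          rw [Mgen_succ]
          push_cast
          ring
      _ = (Mgen m j : ℝ≥0∞) * μ (In m j) := by rw [hstep]
      _ = 1 := ih

end NCKB

namespace NCKB
variable {m : ℕ → ℕ}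

lemma nnnorm_vD_Mgen (hm : ∀ k, 2 ≤ m k) (j : ℕ) (u : Vil m) :
    (‖vD m (Mgen m j) u‖₊ : ℝ≥0∞)
      = (In m j).indicator (fun _ => (Mgen m j : ℝ≥0∞)) u := by
  rw [vD_Mgen_eq hm j u]
  by_cases h : ∀ i < j, (u i).val = 0
  · have hu : u ∈ In m j := by
      intro i hi
      haveI : NeZero (m i) := ⟨by have := hm i; omega⟩
      exact (ZMod.val_eq_zero _).mp (h i hi)
    rw [if_pos h, Set.indicator_of_mem hu]
    simp
  · have hu : u ∉ In m j := by
      intro hu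
      exact h fun i hi => by rw [hu i hi]; exact ZMod.val_zero
    rw [if_neg h, Set.indicator_of_notMem hu]
    simp

lemma lint_vD_Mgen (hm : ∀ k, 2 ≤ m k) (μ : Measure (Vil m)) [IsProbabilityMeasure μ]
    [μ.IsAddLeftInvariant] (j : ℕ) :
    ∫⁻ u, (‖vD m (Mgen m j) u‖₊ : ℝ≥0∞) ∂μ = 1 := by
  rw [lintegral_congr (fun u => nnnorm_vD_Mgen hm j u),
    lintegral_indicator (measurableSet_In m j)]
  rw [setLIntegral_const]
  exact measure_In hm μ j

/-- Lebesgue-constant bound: `∫ ‖D_t‖ ≤ Λ j` for `t < M_j`. -/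
lemma lint_vD_le (hm : ∀ k, 2 ≤ m k) {Λ : ℕ} (hΛ : ∀ k, m k ≤ Λ)
    (μ : Measure (Vil m)) [IsProbabilityMeasure μ] [μ.IsAddLeftInvariant] :
    ∀ j, ∀ t, t < Mgen m j →
      ∫⁻ u, (‖vD m t u‖₊ : ℝ≥0∞) ∂μ ≤ (Λ : ℝ≥0∞) * j := by
  intro j
  induction j with
  | zero =>
    intro t ht
    have : t = 0 := by simpa [Mgen] using ht
    subst this
    simp [vD_zero]
  | succ j ih =>
    intro t ht
    have hMj : 0 < Mgen m j := Mgen_pos hm j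
    have hsm : t / Mgen m j < m j := by
      rw [Nat.div_lt_iff_lt_mul hMj]
      exact lt_of_lt_of_eq ht rfl
    have hxM : t % Mgen m j < Mgen m j := Nat.mod_lt _ hMj
    have hpt : ∀ u, (‖vD m t u‖₊ : ℝ≥0∞)
        ≤ (Λ : ℝ≥0∞) * (‖vD m (Mgen m j) u‖₊ : ℝ≥0∞)
          + (‖vD m (t % Mgen m j) u‖₊ : ℝ≥0∞) := by
      intro u
      rw [vD_split hm (le_of_lt ht) u]
      calc (‖(∑ σ ∈ range (t / Mgen m j), rho m j u ^ σ) * vD m (Mgen m j) u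
            + rho m j u ^ (t / Mgen m j) * vD m (t % Mgen m j) u‖₊ : ℝ≥0∞)
          ≤ (‖(∑ σ ∈ range (t / Mgen m j), rho m j u ^ σ) * vD m (Mgen m j) u‖₊ : ℝ≥0∞)
            + (‖rho m j u ^ (t / Mgen m j) * vD m (t % Mgen m j) u‖₊ : ℝ≥0∞) := by
            rw [← ENNReal.coe_add]
            exact_mod_cast nnnorm_add_le _ _
        _ ≤ (Λ : ℝ≥0∞) * (‖vD m (Mgen m j) u‖₊ : ℝ≥0∞)
            + (‖vD m (t % Mgen m j) u‖₊ : ℝ≥0∞) := by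
            gcongr
            · rw [nnnorm_mul]
              push_cast
              gcongr
              calc (‖∑ σ ∈ range (t / Mgen m j), rho m j u ^ σ‖₊ : ℝ≥0∞)
                  ≤ ∑ σ ∈ range (t / Mgen m j), (‖rho m j u ^ σ‖₊ : ℝ≥0∞) := by
                    rw [← ENNReal.coe_finset_sum]
                    exact_mod_cast nnnorm_sum_le _ _
                _ = ∑ σ ∈ range (t / Mgen m j), 1 := by
                    apply Finset.sum_congr rfl
                    intro σ _
                    rw [nnnorm_pow]
                    have : ‖rho m j u‖₊ = 1 := by
                      ext; simpa using norm_rho m j u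
                    rw [this, one_pow]
                    rfl
                _ = (t / Mgen m j : ℕ) := by simp
                _ ≤ (Λ : ℝ≥0∞) := by
                    have : t / Mgen m j ≤ Λ := le_trans (le_of_lt hsm) (hΛ j)
                    exact_mod_cast this
            · rw [nnnorm_mul, nnnorm_pow]
              have : ‖rho m j u‖₊ = 1 := by
                ext; simpa using norm_rho m j u
              rw [this, one_pow, one_mul]
    calc ∫⁻ u, (‖vD m t u‖₊ : ℝ≥0∞) ∂μ
        ≤ ∫⁻ u, ((Λ : ℝ≥0∞) * (‖vD m (Mgen m j) u‖₊ : ℝ≥0∞)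
            + (‖vD m (t % Mgen m j) u‖₊ : ℝ≥0∞)) ∂μ := lintegral_mono hpt
      _ = (Λ : ℝ≥0∞) * ∫⁻ u, (‖vD m (Mgen m j) u‖₊ : ℝ≥0∞) ∂μ
            + ∫⁻ u, (‖vD m (t % Mgen m j) u‖₊ : ℝ≥0∞) ∂μ := by
          rw [lintegral_add_left, lintegral_const_mul]
          · exact (measurable_vD m (Mgen m j)).nnnorm.coe_nnreal_ennreal
          · exact ((measurable_vD m (Mgen m j)).nnnorm.coe_nnreal_ennreal).const_mul _
      _ ≤ (Λ : ℝ≥0∞) * 1 + (Λ : ℝ≥0∞) * j := by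
          gcongr
          · exact le_of_eq (lint_vD_Mgen hm μ j)
          · exact ih _ hxM
      _ ≤ (Λ : ℝ≥0∞) * (j + 1) := by
          rw [mul_add, mul_one]
          rw [add_comm]
      _ = (Λ : ℝ≥0∞) * ((j : ℕ) + 1 : ℕ) := by push_cast; ring

end NCKB

namespace NCKB

section Ces
variable {α : ℝ} (hα : α ∈ Set.Ioo (0:ℝ) 1)

lemma ces_succ (b : ℝ) (n : ℕ) :
    ces b (n+1) = ces b n * ((b + n + 1) / (n + 1)) := by
  unfold ces
  rw [Finset.prod_range_succ, Nat.factorial_succ]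
  have h1 : ((n.factorial : ℕ) : ℝ) ≠ 0 := by
    exact_mod_cast Nat.factorial_ne_zero n
  have h2 : ((n:ℝ) + 1) ≠ 0 := by positivity
  push_cast
  rw [div_mul_div_comm]
  rw [mul_comm ((n:ℝ) + 1) ((n.factorial : ℕ) : ℝ)]

lemma ces_zero (b : ℝ) : ces b 0 = 1 := by
  unfold ces
  simp

/-- `q n = |A_n^{-α-1}|`. -/
lemma q_succ (n : ℕ) :
    |ces (-α - 1) (n+1)| = |ces (-α - 1) n| * (|(n:ℝ) - α| / (n + 1)) := by
  rw [ces_succ]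
  rw [abs_mul]
  congr 1
  rw [abs_div]
  congr 1
  · congr 1
    ring
  · rw [abs_of_pos]
    positivity

include hα

lemma q_succ_le (n : ℕ) : |ces (-α - 1) (n+1)| ≤ |ces (-α - 1) n| := by
  obtain ⟨h0, h1⟩ := hα
  rw [q_succ]
  have hratio : |(n:ℝ) - α| / (n + 1) ≤ 1 := by
    rw [div_le_one (by positivity)]
    rw [abs_le]
    constructor <;> [nlinarith; nlinarith]
  calc |ces (-α - 1) n| * (|(n:ℝ) - α| / (n + 1))
      ≤ |ces (-α - 1) n| * 1 := by
        apply mul_le_mul_of_nonneg_left hratio (abs_nonneg _)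
    _ = _ := mul_one _

lemma q_antitone : Antitone (fun n => |ces (-α - 1) n|) :=
  antitone_nat_of_succ_le fun n => q_succ_le hα n

lemma q_le_one (n : ℕ) : |ces (-α - 1) n| ≤ 1 := by
  have := q_antitone hα (Nat.zero_le n)
  simpa [ces_zero] using this

/-- Key decay estimate: `|A_r^{-α-1}| (r+1)^{1+α} ≤ 4` for `r ≥ 1`. -/
lemma q_decay : ∀ r, 1 ≤ r → |ces (-α - 1) r| * ((r:ℝ) + 1) ^ ((1:ℝ) + α) ≤ 4 := by
  obtain ⟨h0, h1⟩ := hα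
  intro r
  induction r with
  | zero => omega
  | succ r ih =>
    intro _
    rcases Nat.eq_or_lt_of_le (Nat.one_le_iff_ne_zero.mpr (Nat.succ_ne_zero r)) with h | hr
    · -- r + 1 = 1
      have hr0 : r = 0 := by omega
      subst hr0
      have hq1 : |ces (-α - 1) 1| = α := by
        have := q_succ (α := α) 0
        rw [ces_zero] at this
        simpa [abs_of_pos h0] using this
      have h2 : (2:ℝ) ^ ((1:ℝ) + α) ≤ 4 := by
        calc (2:ℝ) ^ ((1:ℝ) + α) ≤ (2:ℝ) ^ (2:ℝ) := by
              apply Real.rpow_le_rpow_of_exponent_le (by norm_num)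
              linarith
          _ = 4 := by
              rw [show (2:ℝ) ^ (2:ℝ) = (2:ℝ) ^ ((2:ℕ):ℝ) by norm_num, Real.rpow_natCast]
              norm_num
      have hcast : ((0+1:ℕ):ℝ) + 1 = 2 := by norm_num
      rw [hcast, hq1]
      calc α * (2:ℝ) ^ ((1:ℝ) + α) ≤ 1 * 4 :=
            mul_le_mul (le_of_lt h1) h2 (by positivity) (by norm_num)
        _ = 4 := by norm_num
    · -- r ≥ 1
      have hr1 : 1 ≤ r := by omega
      have ihr := ih hr1
      set b : ℝ := 1 + α with hb
      have hbpos : 0 < b := by rw [hb]; linarith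
      have hrpos : (0:ℝ) < (r:ℝ) + 1 := by positivity
      have hu : (0:ℝ) < 1 / ((r:ℝ) + 1) := by positivity
      set u : ℝ := 1 / ((r:ℝ) + 1) with huu
      -- key ratio inequality: (r - α) * (r+2)^b ≤ (r+1)^b * (r+1)
      have hkey : ((r:ℝ) - α) * ((r:ℝ) + 2) ^ b ≤ ((r:ℝ) + 1) ^ b * ((r:ℝ) + 1) := by
        have e1 : (r:ℝ) + 2 = ((r:ℝ) + 1) * (1 + u) := by
          rw [huu]
          field_simp
          ring
        have e2 : ((r:ℝ) + 2) ^ b = ((r:ℝ) + 1) ^ b * (1 + u) ^ b := by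
          rw [e1, Real.mul_rpow (le_of_lt hrpos) (by positivity)]
        have e3 : (1 + u) ^ b ≤ Real.exp (b * u) := by
          calc (1 + u) ^ b ≤ (Real.exp u) ^ b := by
                apply Real.rpow_le_rpow (by positivity) _ (le_of_lt hbpos)
                have := Real.add_one_le_exp u
                linarith
            _ = Real.exp (b * u) := by
                rw [← Real.exp_mul]
                ring_nf
        have e4 : (r:ℝ) - α = ((r:ℝ) + 1) * (1 - b * u) := by
          rw [hb, huu]
          field_simp
          ring
        have e5 : (1 - b * u) * Real.exp (b * u) ≤ 1 := by
          have h6 := Real.add_one_le_exp (-(b * u))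
          have h7 : 1 - b * u ≤ Real.exp (-(b*u)) := by linarith
          calc (1 - b * u) * Real.exp (b * u)
              ≤ Real.exp (-(b*u)) * Real.exp (b * u) := by
                apply mul_le_mul_of_nonneg_right h7 (le_of_lt (Real.exp_pos _))
            _ = 1 := by rw [← Real.exp_add]; simp
        have hbu : 0 ≤ 1 - b * u := by
          have h8 : ((r:ℝ) - α) / ((r:ℝ) + 1) = 1 - b * u := by
            rw [e4]
            field_simp
          rw [← h8]
          have hr' : (1:ℝ) ≤ (r:ℝ) := by exact_mod_cast hr1
          apply div_nonneg _ (le_of_lt hrpos)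
          linarith
        calc ((r:ℝ) - α) * ((r:ℝ) + 2) ^ b
            = ((r:ℝ)+1)^b * (((r:ℝ)+1) * ((1 - b*u) * (1+u)^b)) := by
              rw [e2, e4]; ring
          _ ≤ ((r:ℝ)+1)^b * (((r:ℝ)+1) * ((1 - b*u) * Real.exp (b*u))) := by
              apply mul_le_mul_of_nonneg_left _ (Real.rpow_nonneg (le_of_lt hrpos) b)
              apply mul_le_mul_of_nonneg_left _ (le_of_lt hrpos)
              exact mul_le_mul_of_nonneg_left e3 hbu
          _ ≤ ((r:ℝ)+1)^b * (((r:ℝ)+1) * 1) := by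
              apply mul_le_mul_of_nonneg_left _ (Real.rpow_nonneg (le_of_lt hrpos) b)
              exact mul_le_mul_of_nonneg_left e5 (le_of_lt hrpos)
          _ = ((r:ℝ)+1)^b * ((r:ℝ)+1) := by ring
      have habs : |(r:ℝ) - α| = (r:ℝ) - α := by
        rw [abs_of_nonneg]
        have : (1:ℝ) ≤ (r:ℝ) := by exact_mod_cast hr1
        linarith
      have hq : 0 ≤ |ces (-α - 1) r| := abs_nonneg _
      have step2 : (((r:ℝ) - α) / ((r:ℝ)+1)) * (((r:ℝ)) + 2) ^ b ≤ ((r:ℝ)+1) ^ b := by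
        rw [div_mul_eq_mul_div, div_le_iff₀ hrpos]
        exact hkey
      have step : |ces (-α - 1) r| * ((|(r:ℝ) - α| / ((r:ℝ) + 1)) * (((r:ℝ)) + 2) ^ b)
          ≤ |ces (-α - 1) r| * ((r:ℝ) + 1) ^ b := by
        rw [habs]
        exact mul_le_mul_of_nonneg_left step2 hq
      rw [show ((((r:ℕ)+1 :ℕ)):ℝ) + 1 = (r:ℝ) + 2 by push_cast; ring, q_succ, mul_assoc]
      calc |ces (-α - 1) r| * ((|(r:ℝ) - α| / ((r:ℝ) + 1)) * (((r:ℝ)) + 2) ^ ((1:ℝ) + α))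
          ≤ |ces (-α - 1) r| * ((r:ℝ) + 1) ^ b := by rw [← hb]; exact step
        _ ≤ 4 := by rw [hb]; exact ihr

end Ces
end NCKB

namespace NCKB
variable {m : ℕ → ℕ}

lemma mul_pow_le {y : ℝ} (h0 : 0 < y) (h1 : y < 1) (j : ℕ) :
    ((j:ℝ) + 2) * y ^ j ≤ 3 / (1 - y) := by
  have h1y : 0 < 1 - y := by linarith
  rcases Nat.eq_zero_or_pos j with h | hj
  · subst h
    simp only [pow_zero, mul_one, Nat.cast_zero, zero_add]
    rw [le_div_iff₀ h1y]
    nlinarith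
  · have ha : (0:ℝ) ≤ (1 - y) / y := by positivity
    have hbern : 1 + (j:ℝ) * ((1 - y)/y) ≤ (1 + (1-y)/y) ^ j :=
      one_add_mul_le_pow (by linarith) j
    have hinv : (1 + (1-y)/y) = 1 / y := by field_simp; ring
    rw [hinv] at hbern
    have hyj : 0 < y ^ j := by positivity
    have hj1 : (1:ℝ) ≤ (j:ℝ) := by exact_mod_cast hj
    have hyjle : y ^ j ≤ y / ((j:ℝ) * (1 - y)) := by
      have h2 : (j:ℝ) * ((1-y)/y) ≤ (1/y)^j := by
        calc (j:ℝ) * ((1-y)/y) ≤ 1 + (j:ℝ) * ((1-y)/y) := by linarith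
          _ ≤ (1/y)^j := hbern
      have h3 : (1/y)^j = 1 / y^j := by
        rw [div_pow, one_pow]
      rw [h3] at h2
      have h4 : (j:ℝ) * (1 - y) / y ≤ 1 / y ^ j := by
        rw [mul_div_assoc]
        exact h2
      have h5 : 0 < (j:ℝ) * (1 - y) / y := by positivity
      calc y ^ j = 1 / (1 / y ^ j) := by field_simp
        _ ≤ 1 / ((j:ℝ) * (1 - y) / y) := by
            apply one_div_le_one_div_of_le h5 h4
        _ = y / ((j:ℝ) * (1 - y)) := by
            field_simp
    calc ((j:ℝ) + 2) * y ^ j ≤ ((j:ℝ) + 2) * (y / ((j:ℝ) * (1 - y))) := by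
          apply mul_le_mul_of_nonneg_left hyjle (by positivity)
      _ = (((j:ℝ) + 2) / (j:ℝ)) * (y / (1 - y)) := by
          field_simp
      _ ≤ 3 * (1 / (1 - y)) := by
          apply mul_le_mul
          · rw [div_le_iff₀ (by linarith : (0:ℝ) < (j:ℝ))]
            linarith
          · exact (div_le_div_iff_of_pos_right (by linarith)).mpr (le_of_lt h1)
          · positivity
          · norm_num
      _ = 3 / (1 - y) := by ring

lemma sum_pow_le {x : ℝ} (h0 : 0 ≤ x) (h1 : x < 1) (n : ℕ) :
    ∑ j ∈ range n, x ^ j ≤ 1 / (1 - x) := by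
  have h1x : 0 < 1 - x := by linarith
  have hne : x ≠ 1 := by linarith
  rw [geom_sum_eq hne]
  have heq : (x ^ n - 1)/(x - 1) = (1 - x^n)/(1-x) := by
    have hx1 : x - 1 ≠ 0 := by intro h; apply hne; linarith
    have hx2 : (1:ℝ) - x ≠ 0 := by linarith
    field_simp
    ring
  rw [heq, div_le_div_iff₀ h1x h1x]
  have hxn : 0 ≤ x ^ n := by positivity
  nlinarith

lemma sum_Ico_blocks (hm : ∀ k, 2 ≤ m k) (n : ℕ) (g : ℕ → ℝ≥0∞) :
    ∑ r ∈ Finset.Ico 1 (Mgen m n), g r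
      = ∑ j ∈ range n, ∑ r ∈ Finset.Ico (Mgen m j) (Mgen m (j+1)), g r := by
  induction n with
  | zero => simp [Mgen]
  | succ n ih =>
    rw [Finset.sum_range_succ, ← ih,
      Finset.sum_Ico_consecutive g (by
        have := Mgen_pos hm n; omega : 1 ≤ Mgen m n) (Mgen_mono hm (by omega))]

end NCKB


open NCKB in
set_option maxHeartbeats 1000000 in
/-- uniform `L¹` bound for the truncated negative-order Cesàro kernel. -/
theorem negative_cesaro_kernel_bound (m : ℕ → ℕ) (hm : ∀ k, 2 ≤ m k)
    (Λ : ℕ) (hΛ : ∀ k, m k ≤ Λ)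
    (μ : Measure (Vil m)) [IsProbabilityMeasure μ] [μ.IsAddLeftInvariant]
    (α : ℝ) (hα : α ∈ Set.Ioo (0 : ℝ) 1) :
    ∃ c : ℝ, 0 < c ∧ ∀ k p : ℕ, 1 ≤ k → Mgen m k ≤ p →
      ∫⁻ z : Vil m × Vil m,
          (‖∑ i ∈ Finset.Icc 1 (Mgen m k),
              ((ces (-α - 1) (p - i) : ℝ) : ℂ) * vD m i z.1 * vD m i z.2‖₊ : ℝ≥0∞)
          ∂(μ.prod μ) ≤ ENNReal.ofReal c
    := by
  obtain ⟨hα0, hα1⟩ := hα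
  have hΛ2 : 2 ≤ Λ := le_trans (hm 0) (hΛ 0)
  set L : ℝ := (Λ : ℝ) with hL
  have hL2 : (2:ℝ) ≤ L := by rw [hL]; exact_mod_cast hΛ2
  set w : ℝ := (2:ℝ) ^ (-(α/4)) with hw
  have hw0 : 0 < w := Real.rpow_pos_of_pos (by norm_num) _
  have hw1 : w < 1 := by
    rw [hw]
    apply Real.rpow_lt_one_of_one_lt_of_neg (by norm_num)
    linarith
  have h1w : 0 < 1 - w := by linarith
  have h1w2 : 0 < 1 - w^2 := by nlinarith
  set K : ℝ := 3 / (1 - w) with hK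
  have hK0 : 0 < K := by positivity
  set C : ℝ := K^2 * (1 / (1 - w^2)) with hC
  have hC0 : 0 < C := by positivity
  refine ⟨1 + 4 * L^3 * C, by positivity, ?_⟩
  intro k p hk hp
  set N := Mgen m k with hN
  have hN2 : 2 ≤ N := by
    have h1 : Mgen m 1 ≤ Mgen m k := Mgen_mono hm hk
    have h2 : Mgen m 1 = m 0 * 1 := rfl
    have h3 := hm 0
    show 2 ≤ Mgen m k
    omega
  -- abbreviations
  set Li : ℕ → ℝ≥0∞ := fun i => ∫⁻ u, (‖vD m i u‖₊ : ℝ≥0∞) ∂μ with hLi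
  have hmeasD : ∀ i, Measurable (fun u : Vil m => (‖vD m i u‖₊ : ℝ≥0∞)) :=
    fun i => (measurable_vD m i).nnnorm.coe_nnreal_ennreal
  -- Step 1 : triangle inequality + factorization
  have step1 : ∫⁻ z : Vil m × Vil m,
      (‖∑ i ∈ Finset.Icc 1 N,
          ((ces (-α - 1) (p - i) : ℝ) : ℂ) * vD m i z.1 * vD m i z.2‖₊ : ℝ≥0∞)
        ∂(μ.prod μ)
      ≤ ∑ i ∈ Finset.Icc 1 N,
          ENNReal.ofReal |ces (-α - 1) (p - i)| * (Li i * Li i) := by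
    have hmeasT : ∀ i : ℕ, Measurable (fun z : Vil m × Vil m =>
        (‖((ces (-α - 1) (p - i) : ℝ) : ℂ) * vD m i z.1 * vD m i z.2‖₊ : ℝ≥0∞)) := by
      intro i
      exact ((measurable_const.mul ((measurable_vD m i).comp measurable_fst)).mul
        ((measurable_vD m i).comp measurable_snd)).nnnorm.coe_nnreal_ennreal
    calc ∫⁻ z : Vil m × Vil m,
        (‖∑ i ∈ Finset.Icc 1 N,
            ((ces (-α - 1) (p - i) : ℝ) : ℂ) * vD m i z.1 * vD m i z.2‖₊ : ℝ≥0∞)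
          ∂(μ.prod μ)
        ≤ ∫⁻ z : Vil m × Vil m, ∑ i ∈ Finset.Icc 1 N,
            (‖((ces (-α - 1) (p - i) : ℝ) : ℂ) * vD m i z.1 * vD m i z.2‖₊ : ℝ≥0∞)
          ∂(μ.prod μ) := by
          apply lintegral_mono
          intro z
          dsimp only
          rw [← ENNReal.coe_finset_sum]
          exact_mod_cast nnnorm_sum_le _ _
      _ = ∑ i ∈ Finset.Icc 1 N, ∫⁻ z : Vil m × Vil m,
            (‖((ces (-α - 1) (p - i) : ℝ) : ℂ) * vD m i z.1 * vD m i z.2‖₊ : ℝ≥0∞)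
          ∂(μ.prod μ) := lintegral_finset_sum _ fun i _ => hmeasT i
      _ = ∑ i ∈ Finset.Icc 1 N,
            ENNReal.ofReal |ces (-α - 1) (p - i)| * (Li i * Li i) := by
          apply Finset.sum_congr rfl
          intro i _
          have hpt : ∀ z : Vil m × Vil m,
              (‖((ces (-α - 1) (p - i) : ℝ) : ℂ) * vD m i z.1 * vD m i z.2‖₊ : ℝ≥0∞)
                = ENNReal.ofReal |ces (-α - 1) (p - i)|
                  * ((‖vD m i z.1‖₊ : ℝ≥0∞) * (‖vD m i z.2‖₊ : ℝ≥0∞)) := by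
            intro z
            rw [nnnorm_mul, nnnorm_mul, Complex.nnnorm_real]
            rw [ENNReal.coe_mul, ENNReal.coe_mul, ← enorm_eq_nnnorm, Real.enorm_eq_ofReal_abs]
            ring
          have hmul : Measurable fun z : Vil m × Vil m =>
              (‖vD m i z.1‖₊ : ℝ≥0∞) * (‖vD m i z.2‖₊ : ℝ≥0∞) := by
            exact ((hmeasD i).comp measurable_fst).mul ((hmeasD i).comp measurable_snd)
          rw [lintegral_congr hpt, lintegral_const_mul _ hmul,
            lintegral_prod_mul ((hmeasD i).aemeasurable) ((hmeasD i).aemeasurable)]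
  refine le_trans step1 ?_
  -- Step 2 : split off the top term i = N
  obtain ⟨N', hN'⟩ : ∃ N', N = N' + 1 := ⟨N - 1, by omega⟩
  have hLiN : Li N = 1 := lint_vD_Mgen hm μ k
  have htop : ENNReal.ofReal |ces (-α - 1) (p - N)| * (Li N * Li N) ≤ 1 := by
    rw [hLiN, mul_one, mul_one]
    calc ENNReal.ofReal |ces (-α - 1) (p - N)| ≤ ENNReal.ofReal 1 :=
          ENNReal.ofReal_le_ofReal (q_le_one ⟨hα0, hα1⟩ _)
      _ = 1 := ENNReal.ofReal_one
  have hsplit : ∑ i ∈ Finset.Icc 1 N,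
      ENNReal.ofReal |ces (-α - 1) (p - i)| * (Li i * Li i)
      = (∑ i ∈ Finset.Icc 1 N',
          ENNReal.ofReal |ces (-α - 1) (p - i)| * (Li i * Li i))
        + ENNReal.ofReal |ces (-α - 1) (p - N)| * (Li N * Li N) := by
    rw [hN']
    exact Finset.sum_Icc_succ_top (by omega) _
  rw [hsplit]
  -- Step 3 : re-index the lower part by r = N - i and bound blockwise
  have hre : ∑ i ∈ Finset.Icc 1 N',
      ENNReal.ofReal |ces (-α - 1) (p - i)| * (Li i * Li i)
      = ∑ r ∈ Finset.Icc 1 N',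
          ENNReal.ofReal |ces (-α - 1) (p - (N - r))| * (Li (N - r) * Li (N - r)) := by
    apply Finset.sum_nbij' (fun i => N - i) (fun r => N - r)
    · intro a ha
      rw [Finset.mem_Icc] at ha ⊢
      omega
    · intro a ha
      rw [Finset.mem_Icc] at ha ⊢
      omega
    · intro a ha
      rw [Finset.mem_Icc] at ha
      omega
    · intro a ha
      rw [Finset.mem_Icc] at ha
      omega
    · intro a ha
      rw [Finset.mem_Icc] at ha
      have : N - (N - a) = a := by omega
      rw [this]
  rw [hre]
  -- blocks
  have hblocks : Finset.Icc 1 N' = Finset.Ico 1 N := by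
    rw [hN', Finset.Ico_add_one_right_eq_Icc]
  rw [hblocks]
  have hbsum := sum_Ico_blocks hm k (fun r =>
    ENNReal.ofReal |ces (-α - 1) (p - (N - r))| * (Li (N - r) * Li (N - r)))
  rw [hN] at hbsum ⊢
  rw [hbsum]
  -- Step 4 : bound each block
  have hblock : ∀ j ∈ range k,
      ∑ r ∈ Finset.Ico (Mgen m j) (Mgen m (j+1)),
        ENNReal.ofReal |ces (-α - 1) (p - (Mgen m k - r))|
          * (Li (Mgen m k - r) * Li (Mgen m k - r))
      ≤ ENNReal.ofReal (4 * L^3 * (((j:ℝ) + 2)^2 * ((Mgen m j : ℝ)) ^ (-α))) := by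
    intro j hj
    rw [Finset.mem_range] at hj
    have hMj : 0 < Mgen m j := Mgen_pos hm j
    have hMjk : Mgen m (j+1) ≤ Mgen m k := Mgen_mono hm (by omega)
    have hterm : ∀ r ∈ Finset.Ico (Mgen m j) (Mgen m (j+1)),
        ENNReal.ofReal |ces (-α - 1) (p - (Mgen m k - r))|
          * (Li (Mgen m k - r) * Li (Mgen m k - r))
        ≤ ENNReal.ofReal (4 * ((Mgen m j : ℝ)) ^ (-((1:ℝ) + α)))
            * (((Λ * (j+2) : ℕ) : ℝ≥0∞) * ((Λ * (j+2) : ℕ) : ℝ≥0∞)) := by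
      intro r hr
      rw [Finset.mem_Ico] at hr
      have hr1 : 1 ≤ r := le_trans hMj hr.1
      have hrN : r ≤ Mgen m k - 1 := by omega
      -- coefficient bound
      have hcoef : |ces (-α - 1) (p - (Mgen m k - r))|
          ≤ 4 * ((Mgen m j : ℝ)) ^ (-((1:ℝ) + α)) := by
        have h1 : |ces (-α - 1) (p - (Mgen m k - r))| ≤ |ces (-α - 1) r| :=
          q_antitone ⟨hα0, hα1⟩ (by omega)
        have h2 := q_decay ⟨hα0, hα1⟩ r hr1
        have hrp : (0:ℝ) < ((r:ℝ) + 1) ^ ((1:ℝ) + α) :=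
          Real.rpow_pos_of_pos (by positivity) _
        have h3 : |ces (-α - 1) r| ≤ 4 / ((r:ℝ) + 1) ^ ((1:ℝ) + α) := by
          rw [le_div_iff₀ hrp]
          exact h2
        have h4 : ((Mgen m j : ℝ)) ^ ((1:ℝ) + α) ≤ ((r:ℝ) + 1) ^ ((1:ℝ) + α) := by
          apply Real.rpow_le_rpow (by positivity) _ (by linarith)
          have : (Mgen m j : ℝ) ≤ (r : ℝ) := by exact_mod_cast hr.1
          linarith
        have h5 : 4 / ((r:ℝ) + 1) ^ ((1:ℝ) + α) ≤ 4 / ((Mgen m j : ℝ)) ^ ((1:ℝ) + α) := by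
          apply div_le_div_of_nonneg_left (by norm_num) _ h4
          exact Real.rpow_pos_of_pos (by exact_mod_cast hMj) _
        have h6 : 4 / ((Mgen m j : ℝ)) ^ ((1:ℝ) + α)
            = 4 * ((Mgen m j : ℝ)) ^ (-((1:ℝ) + α)) := by
          rw [Real.rpow_neg (by positivity)]
          ring
        linarith
      -- L¹ bound
      have hLle : Li (Mgen m k - r) ≤ ((Λ * (j+2) : ℕ) : ℝ≥0∞) := by
        have hrk : Mgen m k - r ≤ Mgen m k := by omega
        have hpt : ∀ u, (‖vD m (Mgen m k - r) u‖₊ : ℝ≥0∞)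
            ≤ (‖vD m (Mgen m k) u‖₊ : ℝ≥0∞) + (‖vD m r u‖₊ : ℝ≥0∞) := by
          intro u
          have h := nnnorm_vD_le_reflect hm hrk u
          rw [show Mgen m k - (Mgen m k - r) = r by omega] at h
          rw [← ENNReal.coe_add]
          exact_mod_cast h
        calc Li (Mgen m k - r)
            ≤ ∫⁻ u, ((‖vD m (Mgen m k) u‖₊ : ℝ≥0∞) + (‖vD m r u‖₊ : ℝ≥0∞)) ∂μ :=
              lintegral_mono hpt
          _ = (∫⁻ u, (‖vD m (Mgen m k) u‖₊ : ℝ≥0∞) ∂μ)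
                + ∫⁻ u, (‖vD m r u‖₊ : ℝ≥0∞) ∂μ :=
              lintegral_add_left (hmeasD _) _
          _ ≤ 1 + (Λ : ℝ≥0∞) * (j+1 : ℕ) := by
              gcongr
              · exact le_of_eq (lint_vD_Mgen hm μ k)
              · exact lint_vD_le hm hΛ μ (j+1) r hr.2
          _ ≤ ((Λ * (j+2) : ℕ) : ℝ≥0∞) := by
              have hnat : 1 + Λ * (j+1) ≤ Λ * (j+2) := by nlinarith [hΛ2]
              calc (1 : ℝ≥0∞) + (Λ : ℝ≥0∞) * ((j+1 : ℕ) : ℝ≥0∞)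
                  = ((1 + Λ * (j+1) : ℕ) : ℝ≥0∞) := by push_cast; ring
                _ ≤ ((Λ * (j+2) : ℕ) : ℝ≥0∞) := by exact_mod_cast hnat
      exact mul_le_mul' (ENNReal.ofReal_le_ofReal hcoef) (mul_le_mul' hLle hLle)
    calc ∑ r ∈ Finset.Ico (Mgen m j) (Mgen m (j+1)),
        ENNReal.ofReal |ces (-α - 1) (p - (Mgen m k - r))|
          * (Li (Mgen m k - r) * Li (Mgen m k - r))
        ≤ (Finset.Ico (Mgen m j) (Mgen m (j+1))).card
            • (ENNReal.ofReal (4 * ((Mgen m j : ℝ)) ^ (-((1:ℝ) + α)))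
              * (((Λ * (j+2) : ℕ) : ℝ≥0∞) * ((Λ * (j+2) : ℕ) : ℝ≥0∞))) :=
          Finset.sum_le_card_nsmul _ _ _ hterm
      _ ≤ ENNReal.ofReal (4 * L^3 * (((j:ℝ) + 2)^2 * ((Mgen m j : ℝ)) ^ (-α))) := by
          rw [Nat.card_Ico, nsmul_eq_mul]
          -- convert everything to ofReal
          have e1 : ((Mgen m (j+1) - Mgen m j : ℕ) : ℝ≥0∞)
              = ENNReal.ofReal ((Mgen m (j+1) - Mgen m j : ℕ) : ℝ) := by
            rw [ENNReal.ofReal_natCast]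
          have e2 : ((Λ * (j+2) : ℕ) : ℝ≥0∞) = ENNReal.ofReal ((Λ * (j+2) : ℕ) : ℝ) := by
            rw [ENNReal.ofReal_natCast]
          rw [e1, e2, ← ENNReal.ofReal_mul (by positivity), ← ENNReal.ofReal_mul (by positivity),
            ← ENNReal.ofReal_mul (by positivity)]
          apply ENNReal.ofReal_le_ofReal
          -- now a real inequality
          have hMjpos : (0:ℝ) < (Mgen m j : ℝ) := by exact_mod_cast hMj
          have hcount : ((Mgen m (j+1) - Mgen m j : ℕ) : ℝ) ≤ L * (Mgen m j : ℝ) := by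
            have h1 : Mgen m (j+1) ≤ Λ * Mgen m j := by
              rw [Mgen_succ]
              exact Nat.mul_le_mul_right _ (hΛ j)
            have h2 : (Mgen m (j+1) - Mgen m j : ℕ) ≤ Λ * Mgen m j := by omega
            calc ((Mgen m (j+1) - Mgen m j : ℕ) : ℝ) ≤ ((Λ * Mgen m j : ℕ) : ℝ) := by
                  exact_mod_cast h2
              _ = L * (Mgen m j : ℝ) := by push_cast; ring
          have hcast : ((Λ * (j+2) : ℕ) : ℝ) = L * ((j:ℝ) + 2) := by push_cast; ring
          have hXpos : (0:ℝ) < ((Mgen m j : ℝ)) ^ (-((1:ℝ) + α)) :=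
            Real.rpow_pos_of_pos hMjpos _
          have hmerge : (Mgen m j : ℝ) * ((Mgen m j : ℝ)) ^ (-((1:ℝ) + α))
              = ((Mgen m j : ℝ)) ^ (-α) := by
            have h := (Real.rpow_add hMjpos 1 (-((1:ℝ) + α))).symm
            rw [Real.rpow_one] at h
            rw [h]
            congr 1
            ring
          calc ((Mgen m (j+1) - Mgen m j : ℕ) : ℝ)
              * (4 * ((Mgen m j : ℝ)) ^ (-((1:ℝ) + α))
                * (((Λ * (j+2) : ℕ) : ℝ) * ((Λ * (j+2) : ℕ) : ℝ)))
              ≤ (L * (Mgen m j : ℝ))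
                * (4 * ((Mgen m j : ℝ)) ^ (-((1:ℝ) + α))
                  * ((L * ((j:ℝ) + 2)) * (L * ((j:ℝ) + 2)))) := by
                rw [hcast]
                apply mul_le_mul_of_nonneg_right hcount (by positivity)
            _ = 4 * L^3 * (((j:ℝ) + 2)^2
                  * ((Mgen m j : ℝ) * ((Mgen m j : ℝ)) ^ (-((1:ℝ) + α)))) := by ring
            _ = 4 * L^3 * (((j:ℝ) + 2)^2 * ((Mgen m j : ℝ)) ^ (-α)) := by rw [hmerge]
  -- Step 5 : sum the block bounds
  have hsum : ∑ j ∈ range k,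
      ENNReal.ofReal (4 * L^3 * (((j:ℝ) + 2)^2 * ((Mgen m j : ℝ)) ^ (-α)))
      ≤ ENNReal.ofReal (4 * L^3 * C) := by
    rw [← ENNReal.ofReal_sum_of_nonneg (fun j _ => by positivity)]
    apply ENNReal.ofReal_le_ofReal
    have hper : ∀ j ∈ range k, 4 * L^3 * (((j:ℝ) + 2)^2 * ((Mgen m j : ℝ)) ^ (-α))
        ≤ 4 * L^3 * (K^2 * (w^2) ^ j) := by
      intro j _
      apply mul_le_mul_of_nonneg_left _ (by positivity)
      have hMjpos : (0:ℝ) < (Mgen m j : ℝ) := by exact_mod_cast Mgen_pos hm j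
      have h2j : ((2:ℝ))^j ≤ (Mgen m j : ℝ) := by exact_mod_cast two_pow_le_Mgen hm j
      have hstep1 : ((Mgen m j : ℝ)) ^ (-α) ≤ (((2:ℝ))^j) ^ (-α) := by
        rw [Real.rpow_neg (le_of_lt hMjpos) α,
          Real.rpow_neg (by positivity : (0:ℝ) ≤ (2:ℝ)^j) α]
        apply inv_anti₀ (Real.rpow_pos_of_pos (by positivity) _)
        exact Real.rpow_le_rpow (by positivity) h2j (by linarith)
      have hstep2 : (((2:ℝ))^j) ^ (-α) = (w^4) ^ j := by
        rw [← Real.rpow_natCast (2:ℝ) j, ← Real.rpow_mul (by norm_num)]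
        rw [hw, ← Real.rpow_natCast ((2:ℝ) ^ (-(α/4))) 4,
          ← Real.rpow_mul (by norm_num), ← Real.rpow_natCast _ j,
          ← Real.rpow_mul (by norm_num)]
        congr 1
        push_cast
        ring
      have hstep3 : (((j:ℝ) + 2) * w ^ j)^2 ≤ K^2 := by
        have := mul_pow_le hw0 hw1 j
        rw [← hK] at this
        have hnn : (0:ℝ) ≤ ((j:ℝ) + 2) * w ^ j := by positivity
        nlinarith
      calc ((j:ℝ) + 2)^2 * ((Mgen m j : ℝ)) ^ (-α)
          ≤ ((j:ℝ) + 2)^2 * (w^4) ^ j := by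
            apply mul_le_mul_of_nonneg_left _ (by positivity)
            rw [← hstep2]
            exact hstep1
        _ = (((j:ℝ) + 2) * w ^ j)^2 * (w^2) ^ j := by ring
        _ ≤ K^2 * (w^2) ^ j := by
            apply mul_le_mul_of_nonneg_right hstep3 (by positivity)
    calc ∑ j ∈ range k, 4 * L^3 * (((j:ℝ) + 2)^2 * ((Mgen m j : ℝ)) ^ (-α))
        ≤ ∑ j ∈ range k, 4 * L^3 * (K^2 * (w^2) ^ j) := Finset.sum_le_sum hper
      _ = 4 * L^3 * K^2 * ∑ j ∈ range k, (w^2) ^ j := by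
          rw [Finset.mul_sum]
          apply Finset.sum_congr rfl
          intro j _
          ring
      _ ≤ 4 * L^3 * K^2 * (1 / (1 - w^2)) := by
          apply mul_le_mul_of_nonneg_left (sum_pow_le (by positivity) (by nlinarith) k)
            (by positivity)
      _ = 4 * L^3 * C := by rw [hC]; ring
  calc (∑ j ∈ range k, ∑ r ∈ Finset.Ico (Mgen m j) (Mgen m (j+1)),
        ENNReal.ofReal |ces (-α - 1) (p - (Mgen m k - r))|
          * (Li (Mgen m k - r) * Li (Mgen m k - r)))
        + ENNReal.ofReal |ces (-α - 1) (p - N)| * (Li N * Li N)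
      ≤ (∑ j ∈ range k,
          ENNReal.ofReal (4 * L^3 * (((j:ℝ) + 2)^2 * ((Mgen m j : ℝ)) ^ (-α)))) + 1 := by
        gcongr
        exact hblock _ (by assumption)
    _ ≤ ENNReal.ofReal (4 * L^3 * C) + 1 := by gcongr
    _ = ENNReal.ofReal (1 + 4 * L^3 * C) := by
        rw [ENNReal.ofReal_add (by positivity) (by positivity), ENNReal.ofReal_one, add_comm]
end
end

section
/- For α ∈ (0,1), the one-dimensional Cesàro kernel of negative order satisfies the pointwise bound |∑_{i=1}^n A_{n−i}^{−α−1} D_i(u)| ≤ C(α) |u|^{α−1} for u ∈ G_m \ {0}, where |u| = ∑_{j=0}^∞ u_j / M_{j+1}. -/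
open MeasureTheory Finset
open scoped ENNReal NNReal

noncomputable section

namespace NegCes

def rr (m : ℕ → ℕ) (k : ℕ) (x : Vil m) : ℂ :=
  Complex.exp (2 * Real.pi * Complex.I * ((x k).val : ℂ) / (m k : ℂ))

lemma vpsi_eq (m : ℕ → ℕ) (n : ℕ) (x : Vil m) :
    vpsi m n x = ∏ k ∈ Finset.range (n + 1), rr m k x ^ vdigit m n k := rfl

variable {m : ℕ → ℕ}

lemma Mgen_pos (hm : ∀ k, 2 ≤ m k) (k : ℕ) : 0 < Mgen m k := by
  induction k with
  | zero => simp [Mgen]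
  | succ k ih => have := hm k; exact Nat.mul_pos (by omega) ih

lemma two_pow_le_Mgen (hm : ∀ k, 2 ≤ m k) (k : ℕ) : 2 ^ k ≤ Mgen m k := by
  induction k with
  | zero => simp [Mgen]
  | succ k ih =>
      have := hm k
      calc 2 ^ (k+1) = 2 * 2 ^ k := by ring
      _ ≤ m k * Mgen m k := Nat.mul_le_mul this ih
      _ = Mgen m (k+1) := rfl

lemma Mgen_dvd {k l : ℕ} (h : k ≤ l) : Mgen m k ∣ Mgen m l := by
  induction l with
  | zero => simp_all
  | succ l ih =>
      by_cases h' : k = l + 1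
      · subst h'; rfl
      · exact (ih (by omega)).mul_left (m l)

lemma Mgen_le_Mgen (hm : ∀ k, 2 ≤ m k) {k l : ℕ} (h : k ≤ l) : Mgen m k ≤ Mgen m l :=
  Nat.le_of_dvd (Mgen_pos hm l) (Mgen_dvd h)

lemma lt_Mgen_self (hm : ∀ k, 2 ≤ m k) (k : ℕ) : k < Mgen m k :=
  lt_of_lt_of_le (Nat.lt_two_pow_self (n := k)) (two_pow_le_Mgen hm k)

lemma vdigit_eq_zero_of_lt {n k : ℕ} (h : n < Mgen m k) : vdigit m n k = 0 := by
  unfold vdigit; rw [Nat.div_eq_of_lt h, Nat.zero_mod]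

lemma norm_rr (hm : ∀ k, 2 ≤ m k) (k : ℕ) (x : Vil m) : ‖rr m k x‖ = 1 := by
  have hmk : (m k : ℂ) ≠ 0 := Nat.cast_ne_zero.2 (by have := hm k; omega)
  have : 2 * (Real.pi : ℂ) * Complex.I * (((x k).val : ℕ) : ℂ) / (m k : ℂ) =
      ((2 * Real.pi * ((x k).val : ℕ) / (m k : ℕ) : ℝ) : ℂ) * Complex.I := by
    push_cast
    field_simp
  rw [rr, this, Complex.norm_exp_ofReal_mul_I]

lemma vpsi_extend (hm : ∀ k, 2 ≤ m k) {n K : ℕ} (h : n < K) (x : Vil m) :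
    vpsi m n x = ∏ k ∈ Finset.range K, rr m k x ^ vdigit m n k := by
  rw [vpsi_eq]
  apply Finset.prod_subset (Finset.range_subset_range.2 (by omega))
  intro k hk hnk
  simp only [Finset.mem_range, not_lt] at hnk
  have hlt : n < Mgen m k :=
    lt_of_lt_of_le (lt_of_lt_of_le (Nat.lt_two_pow_self (n := n))
      (Nat.pow_le_pow_right (by omega) (by omega))) (two_pow_le_Mgen hm k)
  rw [vdigit_eq_zero_of_lt hlt, pow_zero]

lemma norm_vpsi (hm : ∀ k, 2 ≤ m k) (n : ℕ) (x : Vil m) : ‖vpsi m n x‖ = 1 := by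
  rw [vpsi_eq, norm_prod]
  apply Finset.prod_eq_one
  intro k _
  rw [norm_pow, norm_rr hm, one_pow]

lemma vdigit_mul_Mgen_lo (hm : ∀ k, 2 ≤ m k) {k t : ℕ} (hk : k < t) (q : ℕ) :
    vdigit m (q * Mgen m t) k = 0 := by
  obtain ⟨c, hc⟩ : Mgen m (k+1) ∣ Mgen m t := Mgen_dvd (by omega)
  have hMk : 0 < Mgen m k := Mgen_pos hm k
  unfold vdigit
  have h1 : q * Mgen m t = q * c * m k * Mgen m k := by
    rw [hc, show Mgen m (k+1) = m k * Mgen m k from rfl]; ring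
  rw [h1, Nat.mul_div_cancel _ hMk, Nat.mul_mod_left]

lemma vdigit_add_block_lo (hm : ∀ k, 2 ≤ m k) {k t : ℕ} (hk : k < t) (q r : ℕ) :
    vdigit m (q * Mgen m t + r) k = vdigit m r k := by
  obtain ⟨c, hc⟩ : Mgen m (k+1) ∣ Mgen m t := Mgen_dvd (by omega)
  have hMk : 0 < Mgen m k := Mgen_pos hm k
  unfold vdigit
  have h1 : Mgen m k ∣ q * Mgen m t := ((Mgen_dvd (by omega : k ≤ t)).mul_left q)
  rw [Nat.add_div_of_dvd_right h1]
  have h2 : q * Mgen m t = m k * (q * c) * Mgen m k := by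
    rw [hc, show Mgen m (k+1) = m k * Mgen m k from rfl]; ring
  rw [h2, Nat.mul_div_cancel _ hMk, Nat.mul_add_mod]

lemma vdigit_add_block_hi (hm : ∀ k, 2 ≤ m k) {k t r : ℕ} (hk : t ≤ k) (hr : r < Mgen m t)
    (q : ℕ) : vdigit m (q * Mgen m t + r) k = vdigit m (q * Mgen m t) k := by
  obtain ⟨s, hs⟩ : Mgen m t ∣ Mgen m k := Mgen_dvd hk
  have hN : 0 < Mgen m t := Mgen_pos hm t
  unfold vdigit
  rw [hs, ← Nat.div_div_eq_div_mul, ← Nat.div_div_eq_div_mul]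
  congr 2
  rw [Nat.add_div_of_dvd_right (dvd_mul_left (Mgen m t) q), Nat.div_eq_of_lt hr, Nat.add_zero]

lemma vdigit_block (hm : ∀ k, 2 ≤ m k) {t r : ℕ} (hr : r < Mgen m t) (q k : ℕ) :
    vdigit m (q * Mgen m t + r) k = vdigit m (q * Mgen m t) k + vdigit m r k := by
  rcases lt_or_ge k t with hk | hk
  · rw [vdigit_add_block_lo hm hk, vdigit_mul_Mgen_lo hm hk, Nat.zero_add]
  · rw [vdigit_add_block_hi hm hk hr,
      vdigit_eq_zero_of_lt (lt_of_lt_of_le hr (Mgen_le_Mgen hm hk)), Nat.add_zero]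

lemma vpsi_block (hm : ∀ k, 2 ≤ m k) {t r : ℕ} (hr : r < Mgen m t) (q : ℕ) (x : Vil m) :
    vpsi m (q * Mgen m t + r) x = vpsi m (q * Mgen m t) x * vpsi m r x := by
  rw [vpsi_extend hm (show q * Mgen m t + r < q * Mgen m t + r + 1 by omega),
    vpsi_extend hm (show q * Mgen m t < q * Mgen m t + r + 1 by omega),
    vpsi_extend hm (show r < q * Mgen m t + r + 1 by omega), ← Finset.prod_mul_distrib]
  exact Finset.prod_congr rfl fun k _ => by rw [vdigit_block hm hr, pow_add]



lemma norm_vD_le (hm : ∀ k, 2 ≤ m k) (n : ℕ) (x : Vil m) : ‖vD m n x‖ ≤ (n : ℝ) := by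
  refine (norm_sum_le _ _).trans ?_
  simp [norm_vpsi hm]

lemma vD_add (n b : ℕ) (u : Vil m) :
    vD m (n + b) u = vD m n u + ∑ r ∈ Finset.range b, vpsi m (n + r) u := by
  unfold vD; rw [Finset.sum_range_add]

lemma vD_mul_Mgen_zero (hm : ∀ k, 2 ≤ m k) {t : ℕ} {u : Vil m}
    (h0 : vD m (Mgen m t) u = 0) (q : ℕ) : vD m (q * Mgen m t) u = 0 := by
  induction q with
  | zero => simp [vD]
  | succ q ih =>
      rw [show (q+1) * Mgen m t = q * Mgen m t + Mgen m t by ring, vD_add, ih, zero_add]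
      rw [Finset.sum_congr rfl fun r hr => vpsi_block hm (Finset.mem_range.1 hr) q u,
        ← Finset.mul_sum, show (∑ r ∈ Finset.range (Mgen m t), vpsi m r u) = vD m (Mgen m t) u
          from rfl, h0, mul_zero]

lemma norm_vD_block (hm : ∀ k, 2 ≤ m k) {t r : ℕ} {u : Vil m}
    (h0 : vD m (Mgen m t) u = 0) (q : ℕ) (hr : r < Mgen m t) :
    ‖vD m (q * Mgen m t + r) u‖ ≤ (Mgen m t : ℝ) := by
  rw [vD_add, vD_mul_Mgen_zero hm h0, zero_add]
  rw [Finset.sum_congr rfl fun s hs => vpsi_block hm (lt_trans (Finset.mem_range.1 hs) hr) q u,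
    ← Finset.mul_sum, show (∑ s ∈ Finset.range r, vpsi m s u) = vD m r u from rfl]
  rw [norm_mul, norm_vpsi hm, one_mul]
  exact (norm_vD_le hm r u).trans (by exact_mod_cast le_of_lt hr)

lemma norm_vD_le_of_zero (hm : ∀ k, 2 ≤ m k) {t : ℕ} {u : Vil m}
    (h0 : vD m (Mgen m t) u = 0) (n : ℕ) : ‖vD m n u‖ ≤ (Mgen m t : ℝ) := by
  have hN : 0 < Mgen m t := Mgen_pos hm t
  have := norm_vD_block hm h0 (n / Mgen m t) (Nat.mod_lt n hN)
  rwa [Nat.div_add_mod'] at this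

lemma vpsi_mul_Mgen (hm : ∀ k, 2 ≤ m k) {t a : ℕ} (ha : a < m t) (u : Vil m) :
    vpsi m (a * Mgen m t) u = rr m t u ^ a := by
  rcases Nat.eq_zero_or_pos a with rfl | hapos
  · simp [vpsi_eq, vdigit]
  · rw [vpsi_extend hm (show a * Mgen m t < a * Mgen m t + 1 by omega)]
    rw [Finset.prod_eq_single t]
    · congr 1
      unfold vdigit
      rw [Nat.mul_div_cancel _ (Mgen_pos hm t), Nat.mod_eq_of_lt ha]
    · intro k hk hkt
      rcases lt_or_gt_of_ne hkt with h | h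
      · rw [vdigit_mul_Mgen_lo hm h, pow_zero]
      · rw [vdigit_eq_zero_of_lt, pow_zero]
        calc a * Mgen m t < m t * Mgen m t :=
              Nat.mul_lt_mul_of_lt_of_le ha le_rfl (Mgen_pos hm t)
        _ = Mgen m (t+1) := rfl
        _ ≤ Mgen m k := Mgen_le_Mgen hm h
    · intro h
      exact absurd (Finset.mem_range.2 (by
        have := lt_Mgen_self hm t
        calc t < Mgen m t := this
        _ ≤ a * Mgen m t := Nat.le_mul_of_pos_left _ hapos
        _ < a * Mgen m t + 1 := by omega)) h

lemma vD_Mgen_succ (hm : ∀ k, 2 ≤ m k) (t : ℕ) (u : Vil m) :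
    vD m (Mgen m (t+1)) u = vD m (Mgen m t) u * ∑ a ∈ Finset.range (m t), rr m t u ^ a := by
  have key : ∀ a, a ≤ m t →
      vD m (a * Mgen m t) u = vD m (Mgen m t) u * ∑ b ∈ Finset.range a, rr m t u ^ b := by
    intro a
    induction a with
    | zero => simp [vD]
    | succ a ih =>
        intro ha
        rw [show (a+1) * Mgen m t = a * Mgen m t + Mgen m t by ring, vD_add, ih (by omega),
          Finset.sum_congr rfl fun s hs => vpsi_block hm (Finset.mem_range.1 hs) a u,
          ← Finset.mul_sum, show (∑ s ∈ Finset.range (Mgen m t), vpsi m s u) = vD m (Mgen m t) u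
            from rfl, vpsi_mul_Mgen hm (by omega) u, Finset.sum_range_succ]
        ring
  have h := key (m t) le_rfl
  rwa [show m t * Mgen m t = Mgen m (t+1) from rfl] at h

lemma rr_pow_m (hm : ∀ k, 2 ≤ m k) (t : ℕ) (u : Vil m) : rr m t u ^ (m t) = 1 := by
  have hmk : (m t : ℂ) ≠ 0 := Nat.cast_ne_zero.2 (by have := hm t; omega)
  rw [rr, ← Complex.exp_nat_mul]
  rw [show (m t : ℂ) * (2 * (Real.pi : ℂ) * Complex.I * (((u t).val : ℕ) : ℂ) / (m t : ℂ)) =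
      (((u t).val : ℕ) : ℂ) * (2 * (Real.pi : ℂ) * Complex.I) by field_simp]
  exact Complex.exp_nat_mul_two_pi_mul_I ((u t).val)

lemma rr_ne_one (hm : ∀ k, 2 ≤ m k) {t : ℕ} {u : Vil m} (h : u t ≠ 0) : rr m t u ≠ 1 := by
  haveI : NeZero (m t) := ⟨by have := hm t; omega⟩
  intro hone
  rw [rr, Complex.exp_eq_one_iff] at hone
  obtain ⟨z, hz⟩ := hone
  have hmk : (m t : ℂ) ≠ 0 := Nat.cast_ne_zero.2 (by have := hm t; omega)
  have hπ : (Real.pi : ℂ) ≠ 0 := by exact_mod_cast Real.pi_ne_zero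
  have hI : Complex.I ≠ 0 := Complex.I_ne_zero
  have hv : (((u t).val : ℕ) : ℂ) = (z : ℂ) * (m t : ℂ) := by
    rw [div_eq_iff hmk] at hz
    have h2 : (2 : ℂ) ≠ 0 := two_ne_zero
    apply mul_left_cancel₀ (mul_ne_zero (mul_ne_zero h2 hπ) hI)
    linear_combination hz
  have hvz : ((u t).val : ℤ) = z * (m t : ℤ) := by exact_mod_cast hv
  have h1 : 0 < (u t).val := Nat.pos_of_ne_zero fun h' => h ((ZMod.val_eq_zero _).1 h')
  have h2 : (u t).val < m t := ZMod.val_lt (u t)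
  have hmz : (0 : ℤ) < (m t : ℤ) := by exact_mod_cast (by omega : 0 < m t)
  rcases le_or_gt z 0 with hz0 | hz0
  · have : z * (m t : ℤ) ≤ 0 := mul_nonpos_of_nonpos_of_nonneg hz0 (le_of_lt hmz)
    omega
  · have h1z : (1 : ℤ) ≤ z := hz0
    have : (m t : ℤ) ≤ z * (m t : ℤ) := le_mul_of_one_le_left (le_of_lt hmz) h1z
    omega

lemma vD_Mgen_zero (hm : ∀ k, 2 ≤ m k) {t : ℕ} {u : Vil m} (h : u t ≠ 0) :
    vD m (Mgen m (t+1)) u = 0 := by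
  rw [vD_Mgen_succ hm, geom_sum_eq (rr_ne_one hm h), rr_pow_m hm, sub_self, zero_div, mul_zero]


lemma ces_zero (β : ℝ) : ces β 0 = 1 := by simp [ces]

lemma ces_succ (β : ℝ) (n : ℕ) : ces β (n+1) = ces β n + ces (β - 1) (n+1) := by
  have hf : ((n+1).factorial : ℝ) = (n+1) * n.factorial := by
    rw [Nat.factorial_succ]; push_cast; ring
  have hfn : (n.factorial : ℝ) ≠ 0 := Nat.cast_ne_zero.2 n.factorial_ne_zero
  have hn1 : ((n:ℝ) + 1) ≠ 0 := by positivity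
  have hp1 : (∏ j ∈ Finset.range (n+1), (β + j + 1)) =
      (∏ j ∈ Finset.range n, (β + j + 1)) * (β + n + 1) := Finset.prod_range_succ _ n
  have hp2 : (∏ j ∈ Finset.range (n+1), (β - 1 + j + 1)) =
      β * ∏ j ∈ Finset.range n, (β + j + 1) := by
    rw [Finset.prod_range_succ']
    have : ∀ j ∈ Finset.range n, (β - 1 + (((j+1):ℕ):ℝ) + 1) = (β + j + 1) := by
      intro j _; push_cast; ring
    rw [Finset.prod_congr rfl this]
    push_cast; ring
  unfold ces
  rw [hp1, hp2, hf]
  field_simp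
  ring

lemma sum_ces (β : ℝ) (n : ℕ) : ∑ j ∈ Finset.range (n+1), ces (β - 1) j = ces β n := by
  induction n with
  | zero => simp [ces]
  | succ n ih =>
      rw [Finset.sum_range_succ, ih]
      exact (ces_succ β n).symm

lemma ces_neg_eq_prod (α : ℝ) (n : ℕ) :
    ces (-α) n = ∏ k ∈ Finset.range n, (1 - α / ((k:ℝ) + 1)) := by
  have h1 : ∀ k ∈ Finset.range n, (1 - α / ((k:ℝ)+1)) = (-α + k + 1) / ((k:ℝ)+1) := by
    intro k _
    have : ((k:ℝ) + 1) ≠ 0 := by positivity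
    field_simp
    ring
  rw [Finset.prod_congr rfl h1, Finset.prod_div_distrib]
  unfold ces
  congr 1
  rw [← Finset.prod_range_add_one_eq_factorial n, Nat.cast_prod]
  push_cast
  rfl

lemma ces_neg_pos {α : ℝ} (hα : α < 1) (hα0 : 0 ≤ α) (n : ℕ) : 0 < ces (-α) n := by
  rw [ces_neg_eq_prod]
  apply Finset.prod_pos
  intro k _
  have hk : (0:ℝ) < (k:ℝ) + 1 := by positivity
  have : α / ((k:ℝ)+1) ≤ α := by
    rw [div_le_iff₀ hk]
    nlinarith
  linarith

lemma ces_neg_le_one {α : ℝ} (hα : α < 1) (hα0 : 0 ≤ α) (n : ℕ) : ces (-α) n ≤ 1 := by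
  rw [ces_neg_eq_prod]
  apply Finset.prod_le_one
  · intro k _
    have hk : (0:ℝ) < (k:ℝ) + 1 := by positivity
    have : α / ((k:ℝ)+1) ≤ α := by rw [div_le_iff₀ hk]; nlinarith
    linarith
  · intro k _
    have hk : (0:ℝ) < (k:ℝ) + 1 := by positivity
    have : 0 ≤ α / ((k:ℝ)+1) := by positivity
    linarith

lemma ces_neg_antitone {α : ℝ} (hα : α < 1) (hα0 : 0 ≤ α) (n : ℕ) :
    ces (-α) (n+1) ≤ ces (-α) n := by
  rw [ces_neg_eq_prod, ces_neg_eq_prod, Finset.prod_range_succ]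
  have h1 : 0 < ∏ k ∈ Finset.range n, (1 - α / ((k:ℝ) + 1)) := by
    rw [← ces_neg_eq_prod]; exact ces_neg_pos hα hα0 n
  have h2 : 1 - α / ((n:ℝ)+1) ≤ 1 := by
    have : 0 ≤ α / ((n:ℝ)+1) := by positivity
    linarith
  nlinarith

lemma log_le_harmonic (n : ℕ) :
    Real.log ((n:ℝ) + 1) ≤ ∑ k ∈ Finset.range n, 1 / ((k:ℝ) + 1) := by
  induction n with
  | zero => simp
  | succ n ih =>
      rw [Finset.sum_range_succ]
      have hpos : (0:ℝ) < (n:ℝ) + 1 := by positivity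
      have hkey : Real.log (((n:ℕ)+1:ℝ) + 1) - Real.log ((n:ℝ)+1) ≤ 1 / ((n:ℝ)+1) := by
        rw [← Real.log_div (by positivity) (by positivity)]
        have := Real.log_le_sub_one_of_pos
          (show (0:ℝ) < (((n:ℝ)+1)+1) / ((n:ℝ)+1) by positivity)
        have heq : (((n:ℝ)+1)+1) / ((n:ℝ)+1) - 1 = 1 / ((n:ℝ)+1) := by field_simp; ring
        calc Real.log ((((n:ℝ)+1)+1) / ((n:ℝ)+1)) ≤ (((n:ℝ)+1)+1) / ((n:ℝ)+1) - 1 := this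
        _ = 1 / ((n:ℝ)+1) := heq
      push_cast
      push_cast at ih hkey
      linarith

lemma ces_neg_le_rpow {α : ℝ} (hα : α < 1) (hα0 : 0 ≤ α) (n : ℕ) :
    ces (-α) n ≤ ((n:ℝ) + 1) ^ (-α) := by
  rw [ces_neg_eq_prod]
  have step1 : (∏ k ∈ Finset.range n, (1 - α / ((k:ℝ) + 1))) ≤
      ∏ k ∈ Finset.range n, Real.exp (-(α / ((k:ℝ) + 1))) := by
    apply Finset.prod_le_prod
    · intro k _
      have hk : (0:ℝ) < (k:ℝ) + 1 := by positivity
      have : α / ((k:ℝ)+1) ≤ α := by rw [div_le_iff₀ hk]; nlinarith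
      linarith
    · intro k _
      have := Real.add_one_le_exp (-(α / ((k:ℝ) + 1)))
      linarith
  rw [← Real.exp_sum] at step1
  have step2 : (∑ k ∈ Finset.range n, -(α / ((k:ℝ) + 1))) ≤ -α * Real.log ((n:ℝ)+1) := by
    have h1 : (∑ k ∈ Finset.range n, -(α / ((k:ℝ) + 1))) =
        -α * ∑ k ∈ Finset.range n, 1 / ((k:ℝ) + 1) := by
      rw [Finset.mul_sum]
      apply Finset.sum_congr rfl
      intro k _; field_simp
    rw [h1]
    have h2 := log_le_harmonic n
    nlinarith [h2, hα0]
  have step3 : ((n:ℝ)+1) ^ (-α) = Real.exp (-α * Real.log ((n:ℝ)+1)) := by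
    rw [Real.rpow_def_of_pos (by positivity)]
    ring_nf
  calc (∏ k ∈ Finset.range n, (1 - α / ((k:ℝ) + 1)))
      ≤ Real.exp (∑ k ∈ Finset.range n, -(α / ((k:ℝ) + 1))) := step1
  _ ≤ Real.exp (-α * Real.log ((n:ℝ)+1)) := Real.exp_le_exp.2 step2
  _ = ((n:ℝ)+1) ^ (-α) := step3.symm

lemma sum_rpow_le {α : ℝ} (hα0 : 0 < α) (hα : α < 1) (M : ℕ) :
    ∑ k ∈ Finset.range M, ((k:ℝ) + 1) ^ (-α) ≤ (M:ℝ) ^ (1 - α) / (1 - α) := by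
  induction M with
  | zero => simp [Real.zero_rpow (show (1:ℝ) - α ≠ 0 by linarith)]
  | succ M ih =>
      rw [Finset.sum_range_succ]
      set c : ℝ := (M:ℝ) + 1 with hc
      have hcpos : (0:ℝ) < c := by positivity
      have hc1 : (1:ℝ) ≤ c := by
        rw [hc]
        have : (0:ℝ) ≤ (M:ℝ) := Nat.cast_nonneg M
        linarith
      -- key: c^(1-α) - M^(1-α) ≥ (1-α) * c^(-α)
      have bern : (1 - 1/c) ^ (1 - α) ≤ 1 - (1 - α)/c := by
        have h := rpow_one_add_le_one_add_mul_self
          (show (-1:ℝ) ≤ -(1/c) by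
            have : 1/c ≤ 1 := by rw [div_le_one hcpos]; exact hc1
            linarith)
          (show (0:ℝ) ≤ 1 - α by linarith) (show (1:ℝ) - α ≤ 1 by linarith)
        have he : (1 + -(1/c)) = 1 - 1/c := by ring
        have he2 : 1 + (1-α) * -(1/c) = 1 - (1-α)/c := by ring
        rw [he, he2] at h
        exact h
      have hM : (M:ℝ) = c - 1 := by rw [hc]; ring
      have hfrac : (M:ℝ) = c * (1 - 1/c) := by
        rw [hM]; field_simp
      have key : (M:ℝ) ^ (1-α) ≤ c ^ (1-α) - (1-α) * c ^ (-α) := by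
        have h1 : (M:ℝ) ^ (1-α) = c ^ (1-α) * (1 - 1/c) ^ (1-α) := by
          rw [hfrac, Real.mul_rpow (le_of_lt hcpos) (by
            have : 1/c ≤ 1 := by rw [div_le_one hcpos]; exact hc1
            linarith)]
        have h2 : c ^ (1-α) * (1 - 1/c) ^ (1-α) ≤ c ^ (1-α) * (1 - (1-α)/c) := by
          apply mul_le_mul_of_nonneg_left bern (le_of_lt (Real.rpow_pos_of_pos hcpos _))
        have h3 : c ^ (1-α) * (1 - (1-α)/c) = c ^ (1-α) - (1-α) * (c ^ (1-α) / c) := by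
          ring
        have h4 : c ^ (1-α) / c = c ^ (-α) := by
          rw [div_eq_mul_inv, ← Real.rpow_neg_one c, ← Real.rpow_add hcpos]
          congr 1
          ring
        rw [h1]
        calc c ^ (1-α) * (1 - 1/c) ^ (1-α) ≤ c ^ (1-α) * (1 - (1-α)/c) := h2
        _ = c ^ (1-α) - (1-α) * (c ^ (1-α) / c) := h3
        _ = c ^ (1-α) - (1-α) * c ^ (-α) := by rw [h4]
      have h1α : (0:ℝ) < 1 - α := by linarith
      have final : (M:ℝ) ^ (1-α) / (1-α) + c ^ (-α) ≤ c ^ (1-α) / (1-α) := by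
        rw [div_add' _ _ _ (ne_of_gt h1α), div_le_div_iff₀ h1α h1α]
        nlinarith [key]
      calc (∑ k ∈ Finset.range M, ((k:ℝ) + 1) ^ (-α)) + ((M:ℝ) + 1) ^ (-α)
          ≤ (M:ℝ) ^ (1-α) / (1-α) + c ^ (-α) := by
            apply add_le_add ih le_rfl
      _ ≤ c ^ (1-α) / (1-α) := final
      _ = ((M+1:ℕ):ℝ) ^ (1-α) / (1-α) := by push_cast [hc]; ring_nf


lemma vabs_term_nonneg (u : Vil m) (j : ℕ) : 0 ≤ ((u j).val : ℝ) / Mgen m (j + 1) := by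
  positivity

set_option maxHeartbeats 1000000 in
lemma vabs_summable (hm : ∀ k, 2 ≤ m k) {Λ : ℕ} (hΛ : ∀ k, m k ≤ Λ) (u : Vil m) :
    Summable (fun j => ((u j).val : ℝ) / Mgen m (j + 1)) := by
  refine Summable.of_nonneg_of_le (vabs_term_nonneg u) (fun j => ?_)
    ((summable_geometric_of_lt_one (r := (1/2:ℝ)) (by norm_num) (by norm_num)).mul_left ((Λ:ℝ) * (1/2)))
  · 
    haveI : NeZero (m j) := ⟨by have := hm j; omega⟩
    have h1 : ((u j).val : ℝ) ≤ (Λ : ℝ) := by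
      have h1a := ZMod.val_lt (u j)
      have h1b := hΛ j
      exact_mod_cast (by omega : (u j).val ≤ Λ)
    have h2 : (2:ℝ) ^ (j+1) ≤ (Mgen m (j+1) : ℝ) := by
      exact_mod_cast two_pow_le_Mgen hm (j+1)
    have h3 : (0:ℝ) < Mgen m (j+1) := by exact_mod_cast Mgen_pos hm (j+1)
    have h4 : (0:ℝ) < (2:ℝ)^(j+1) := by positivity
    have heq : ((Λ : ℝ) * (1/2)) * (1/2) ^ j = (Λ:ℝ) / 2 ^ (j+1) := by
      rw [one_div, inv_pow, pow_succ]
      rw [div_eq_mul_inv, mul_inv]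
      ring
    rw [heq]
    gcongr

lemma vabs_lower (hm : ∀ k, 2 ≤ m k) {Λ : ℕ} (hΛ : ∀ k, m k ≤ Λ) {u : Vil m} {t : ℕ}
    (h : u t ≠ 0) : 1 / (Mgen m (t+1) : ℝ) ≤ vabs m u := by
  haveI : NeZero (m t) := ⟨by have := hm t; omega⟩
  have hval : 1 ≤ (u t).val := Nat.pos_of_ne_zero fun h' => h ((ZMod.val_eq_zero _).1 h')
  have hM : (0:ℝ) < Mgen m (t+1) := by exact_mod_cast Mgen_pos hm (t+1)
  have h1 : 1 / (Mgen m (t+1) : ℝ) ≤ ((u t).val : ℝ) / Mgen m (t + 1) := by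
    gcongr
    exact_mod_cast hval
  exact h1.trans (Summable.le_tsum (vabs_summable hm hΛ u) t fun j _ => vabs_term_nonneg u j)

lemma vabs_upper (hm : ∀ k, 2 ≤ m k) {Λ : ℕ} (hΛ : ∀ k, m k ≤ Λ) {u : Vil m} {t : ℕ}
    (h0 : ∀ i < t, u i = 0) : vabs m u ≤ (Λ : ℝ) / Mgen m (t+1) := by
  have hMt : (0:ℝ) < Mgen m t := by exact_mod_cast Mgen_pos hm t
  have hMt1 : (0:ℝ) < Mgen m (t+1) := by exact_mod_cast Mgen_pos hm (t+1)
  have main : ∀ J, t ≤ J →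
      (∑ j ∈ Finset.range J, ((u j).val : ℝ) / Mgen m (j + 1)) ≤
        1 / Mgen m t - 1 / Mgen m J := by
    intro J hJ
    induction J, hJ using Nat.le_induction with
    | base =>
        have hz : ∀ j ∈ Finset.range t, ((u j).val : ℝ) / Mgen m (j + 1) = 0 := by
          intro j hj
          rw [h0 j (Finset.mem_range.1 hj)]
          simp
        rw [Finset.sum_congr rfl hz]
        simp
    | succ J hJ ih =>
        rw [Finset.sum_range_succ]
        haveI : NeZero (m J) := ⟨by have := hm J; omega⟩
        have hMJ : (0:ℝ) < Mgen m J := by exact_mod_cast Mgen_pos hm J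
        have hMJ1 : (0:ℝ) < Mgen m (J+1) := by exact_mod_cast Mgen_pos hm (J+1)
        have hMrec : (Mgen m (J+1) : ℝ) = (m J : ℝ) * Mgen m J := by
          exact_mod_cast (rfl : Mgen m (J+1) = m J * Mgen m J)
        have hvv : ((u J).val : ℝ) ≤ (m J : ℝ) - 1 := by
          have hv1 := ZMod.val_lt (u J)
          have hv2 : ((u J).val : ℝ) + 1 ≤ (m J : ℝ) := by exact_mod_cast hv1
          linarith
        have hstep : ((u J).val : ℝ) / Mgen m (J + 1) ≤ 1 / Mgen m J - 1 / Mgen m (J+1) := by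
          have hb : (0:ℝ) < (m J : ℝ) := by
            have := hm J
            exact_mod_cast (by omega : 0 < m J)
          have hrhs : 1 / (Mgen m J : ℝ) - 1 / Mgen m (J+1) = ((m J : ℝ) - 1) / Mgen m (J+1) := by
            field_simp [hMrec]
            rw [hMrec]; ring
          rw [hrhs]
          gcongr
        linarith
  have key : ∀ J, (∑ j ∈ Finset.range J, ((u j).val : ℝ) / Mgen m (j + 1)) ≤ 1 / Mgen m t := by
    intro J
    rcases le_or_gt t J with hJ | hJ
    · have hMJ : (0:ℝ) < Mgen m J := by exact_mod_cast Mgen_pos hm J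
      have hMJ' : (0:ℝ) < 1 / (Mgen m J : ℝ) := by positivity
      linarith [main J hJ]
    · have hz : ∀ j ∈ Finset.range J, ((u j).val : ℝ) / Mgen m (j + 1) = 0 := by
        intro j hj
        rw [h0 j (by have := Finset.mem_range.1 hj; omega)]
        simp
      rw [Finset.sum_congr rfl hz]
      simp
  have h1 : vabs m u ≤ 1 / Mgen m t :=
    Real.tsum_le_of_sum_range_le (vabs_term_nonneg u) key
  have h2 : (1:ℝ) / Mgen m t ≤ (Λ:ℝ) / Mgen m (t+1) := by
    rw [div_le_div_iff₀ hMt hMt1]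
    have hMrec : (Mgen m (t+1) : ℝ) = (m t : ℝ) * Mgen m t := by
      exact_mod_cast (rfl : Mgen m (t+1) = m t * Mgen m t)
    rw [hMrec]
    have hΛt : (m t : ℝ) ≤ (Λ : ℝ) := by exact_mod_cast hΛ t
    nlinarith
  linarith


end NegCes

/-- pointwise bound `|∑_{i=1}^n A_{n-i}^{-α-1} D_i(u)| ≤ C(α)|u|^{α-1}`. -/
theorem negative_cesaro_kernel_pointwise (m : ℕ → ℕ) (hm : ∀ k, 2 ≤ m k)
    (Λ : ℕ) (hΛ : ∀ k, m k ≤ Λ) (α : ℝ) (hα : α ∈ Set.Ioo (0 : ℝ) 1) :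
    ∃ C : ℝ, 0 < C ∧ ∀ n : ℕ, 1 ≤ n → ∀ u : Vil m, u ≠ 0 →
      ‖∑ i ∈ Finset.Icc 1 n, ((ces (-α - 1) (n - i) : ℝ) : ℂ) * vD m i u‖ ≤
        C * vabs m u ^ (α - 1) := by
  classical
  obtain ⟨hα0, hα1⟩ := hα
  have hΛ2 : 2 ≤ Λ := le_trans (hm 0) (hΛ 0)
  have hΛ2' : (2:ℝ) ≤ (Λ:ℝ) := by exact_mod_cast hΛ2
  have hCpos : (0:ℝ) < 2 * Λ / (1 - α) := by
    apply div_pos (by nlinarith) (by linarith)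
  refine ⟨2 * Λ / (1 - α), hCpos, ?_⟩
  intro n hn u hu
  -- least nonzero digit
  have hex : ∃ t, u t ≠ 0 := by
    by_contra h
    push_neg at h
    exact hu (funext fun k => h k)
  set t := Nat.find hex with hts
  have ht : u t ≠ 0 := Nat.find_spec hex
  have ht0 : ∀ i < t, u i = 0 := fun i hi => by
    by_contra h
    exact (Nat.find_min hex hi) h
  set N := Mgen m (t+1) with hNdef
  have hNpos : 0 < N := NegCes.Mgen_pos hm (t+1)
  have hNposR : (0:ℝ) < (N:ℝ) := by exact_mod_cast hNpos
  have hD0 : vD m N u = 0 := NegCes.vD_Mgen_zero hm ht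
  have hDle : ∀ k, ‖vD m k u‖ ≤ (N:ℝ) := NegCes.norm_vD_le_of_zero hm hD0
  -- abbreviations
  set d : ℕ → ℝ := fun i => ces (-α) i with hd
  set ψ : ℕ → ℂ := fun j => vpsi m (n-1-j) u with hψ
  set B : ℕ → ℝ := fun l => ((min l (2*N) : ℕ) : ℝ) with hB
  -- Step A : kernel transformation
  have hinner : ∀ k, k < n → (∑ i ∈ Finset.Icc (k+1) n, ces (-α-1) (n-i)) = ces (-α) (n-1-k) := by
    intro k hk
    calc ∑ i ∈ Finset.Icc (k+1) n, ces (-α-1) (n-i)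
        = ∑ j ∈ Finset.range (n-k), ces (-α-1) (n-k-1-j) := by
          rw [← Finset.Ico_add_one_right_eq_Icc, Finset.sum_Ico_eq_sum_range,
            show n + 1 - (k+1) = n - k by omega]
          exact Finset.sum_congr rfl fun j _ => by congr 1; omega
      _ = ∑ j ∈ Finset.range (n-k), ces (-α-1) j := Finset.sum_range_reflect _ _
      _ = ∑ j ∈ Finset.range ((n-1-k)+1), ces ((-α)-1) j := by
          rw [show n - k = (n-1-k)+1 by omega]
      _ = ces (-α) (n-1-k) := NegCes.sum_ces (-α) (n-1-k)
  have hswap : (∑ i ∈ Finset.Icc 1 n, ((ces (-α - 1) (n - i) : ℝ) : ℂ) * vD m i u)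
      = ∑ j ∈ Finset.range n, ((d j : ℝ) : ℂ) * ψ j := by
    have h1 : (∑ i ∈ Finset.Icc 1 n, ((ces (-α - 1) (n - i) : ℝ) : ℂ) * vD m i u)
        = ∑ i ∈ Finset.Icc 1 n, ∑ k ∈ Finset.range i,
            ((ces (-α - 1) (n - i) : ℝ) : ℂ) * vpsi m k u := by
      exact Finset.sum_congr rfl fun i _ => by rw [vD, Finset.mul_sum]
    have h2 : (∑ i ∈ Finset.Icc 1 n, ∑ k ∈ Finset.range i,
            ((ces (-α - 1) (n - i) : ℝ) : ℂ) * vpsi m k u)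
        = ∑ k ∈ Finset.range n, ∑ i ∈ Finset.Icc (k+1) n,
            ((ces (-α - 1) (n - i) : ℝ) : ℂ) * vpsi m k u := by
      apply Finset.sum_comm'
      intro i k
      simp only [Finset.mem_Icc, Finset.mem_range]
      omega
    have h3 : (∑ k ∈ Finset.range n, ∑ i ∈ Finset.Icc (k+1) n,
            ((ces (-α - 1) (n - i) : ℝ) : ℂ) * vpsi m k u)
        = ∑ k ∈ Finset.range n, ((ces (-α) (n-1-k) : ℝ) : ℂ) * vpsi m k u := by
      apply Finset.sum_congr rfl
      intro k hk
      rw [← Finset.sum_mul, ← Complex.ofReal_sum, hinner k (Finset.mem_range.1 hk)]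
    have h4 : (∑ k ∈ Finset.range n, ((ces (-α) (n-1-k) : ℝ) : ℂ) * vpsi m k u)
        = ∑ j ∈ Finset.range n, ((d j : ℝ) : ℂ) * ψ j := by
      rw [← Finset.sum_range_reflect (fun j => ((d j : ℝ) : ℂ) * ψ j) n]
      apply Finset.sum_congr rfl
      intro k hk
      have hkn : k < n := Finset.mem_range.1 hk
      simp only [hd, hψ]
      congr 2
      omega
    rw [h1, h2, h3, h4]
  -- Step B : bounds on partial sums of ψ
  have hT : ∀ l, l ≤ n → ‖∑ j ∈ Finset.range l, ψ j‖ ≤ B l := by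
    intro l hl
    have bound1 : ‖∑ j ∈ Finset.range l, ψ j‖ ≤ (l:ℝ) := by
      refine (norm_sum_le _ _).trans ?_
      simp [hψ, NegCes.norm_vpsi hm]
    have hTeq : (∑ j ∈ Finset.range l, ψ j) = vD m n u - vD m (n-l) u := by
      have e1 : (∑ j ∈ Finset.range l, ψ j) = ∑ j ∈ Finset.range l, vpsi m ((n-l)+j) u := by
        rw [← Finset.sum_range_reflect (fun j => vpsi m ((n-l)+j) u) l]
        apply Finset.sum_congr rfl
        intro j hj
        have := Finset.mem_range.1 hj
        simp only [hψ]
        congr 1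
        omega
      have e2 : (∑ i ∈ Finset.Ico (n-l) n, vpsi m i u)
          = ∑ j ∈ Finset.range l, vpsi m ((n-l)+j) u := by
        rw [Finset.sum_Ico_eq_sum_range, show n - (n-l) = l by omega]
      rw [e1, ← e2, Finset.sum_Ico_eq_sub _ (by omega : n - l ≤ n)]
      rfl
    have bound2 : ‖∑ j ∈ Finset.range l, ψ j‖ ≤ 2*(N:ℝ) := by
      rw [hTeq]
      refine (norm_sub_le _ _).trans ?_
      have := hDle n
      have := hDle (n-l)
      linarith
    rw [hB]
    simp only [Nat.cast_min]
    apply le_min bound1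
    push_cast
    linarith
  -- positivity and monotonicity of d
  have hdpos : ∀ i, 0 < d i := fun i => NegCes.ces_neg_pos hα1 (le_of_lt hα0) i
  have hdmono : ∀ i, d (i+1) ≤ d i := fun i => NegCes.ces_neg_antitone hα1 (le_of_lt hα0) i
  -- Abel summation bound
  have habel := Finset.sum_range_by_parts d ψ n
  have hKbound : ‖∑ j ∈ Finset.range n, ((d j : ℝ) : ℂ) * ψ j‖ ≤
      d (n-1) * B n + ∑ i ∈ Finset.range (n-1), (d i - d (i+1)) * B (i+1) := by
    have hsm : (∑ j ∈ Finset.range n, ((d j : ℝ) : ℂ) * ψ j)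
        = ∑ j ∈ Finset.range n, d j • ψ j := by
      exact Finset.sum_congr rfl fun j _ => (Complex.real_smul).symm
    rw [hsm, habel]
    refine (norm_sub_le _ _).trans ?_
    have hB1 : ‖d (n-1) • ∑ i ∈ Finset.range n, ψ i‖ ≤ d (n-1) * B n := by
      rw [norm_smul, Real.norm_eq_abs, abs_of_pos (hdpos (n-1))]
      exact mul_le_mul_of_nonneg_left (hT n le_rfl) (le_of_lt (hdpos (n-1)))
    have hB2 : ‖∑ i ∈ Finset.range (n-1), (d (i+1) - d i) • ∑ j ∈ Finset.range (i+1), ψ j‖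
        ≤ ∑ i ∈ Finset.range (n-1), (d i - d (i+1)) * B (i+1) := by
      refine (norm_sum_le _ _).trans ?_
      apply Finset.sum_le_sum
      intro i hi
      have hin : i < n - 1 := Finset.mem_range.1 hi
      rw [norm_smul, Real.norm_eq_abs, abs_sub_comm, abs_of_nonneg (by linarith [hdmono i])]
      apply mul_le_mul_of_nonneg_left (hT (i+1) (by omega)) (by linarith [hdmono i])
    linarith
  -- reverse Abel : the bound equals ∑ d i * χ i
  set χ : ℕ → ℝ := fun i => if i < 2*N then (1:ℝ) else 0 with hχ
  have hSχ : ∀ l, (∑ j ∈ Finset.range l, χ j) = B l := by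
    intro l
    induction l with
    | zero => simp [hB]
    | succ l ih =>
        rw [Finset.sum_range_succ, ih]
        rcases lt_or_ge l (2*N) with h | h
        · rw [hχ]
          simp only [if_pos h, hB]
          rw [show min (l+1) (2*N) = (min l (2*N)) + 1 by omega]
          push_cast
          ring
        · rw [hχ]
          simp only [if_neg (by omega : ¬ l < 2*N), hB]
          rw [show min (l+1) (2*N) = min l (2*N) by omega]
          ring
  have habel2 := Finset.sum_range_by_parts d χ n
  have hEq : d (n-1) * B n + ∑ i ∈ Finset.range (n-1), (d i - d (i+1)) * B (i+1)
      = ∑ i ∈ Finset.range n, d i * χ i := by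
    simp only [smul_eq_mul, hSχ] at habel2
    have hneg : (∑ i ∈ Finset.range (n-1), (d i - d (i+1)) * B (i+1))
        = - ∑ i ∈ Finset.range (n-1), (d (i+1) - d i) * B (i+1) := by
      rw [← Finset.sum_neg_distrib]
      exact Finset.sum_congr rfl fun i _ => by ring
    rw [hneg]
    linarith [habel2]
  -- bound ∑ d i * χ i by ∑_{i < 2N} d i
  have hchain : (∑ i ∈ Finset.range n, d i * χ i) ≤ ∑ i ∈ Finset.range (2*N), d i := by
    have e1 : ∀ i, d i * χ i = (if i < 2*N then d i else 0) := by
      intro i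
      rw [hχ]
      by_cases h : i < 2*N <;> simp [h]
    calc (∑ i ∈ Finset.range n, d i * χ i)
        = ∑ i ∈ Finset.range n, (if i < 2*N then d i else 0) :=
          Finset.sum_congr rfl fun i _ => e1 i
      _ ≤ ∑ i ∈ Finset.range (n + 2*N), (if i < 2*N then d i else 0) := by
          apply Finset.sum_le_sum_of_subset_of_nonneg (Finset.range_subset_range.2 (by omega))
          intro i _ _
          by_cases h : i < 2*N <;> simp [h, le_of_lt (hdpos i)]
      _ = ∑ i ∈ Finset.range (2*N), d i := by
          rw [← Finset.sum_subset (Finset.range_subset_range.2 (by omega : 2*N ≤ n + 2*N))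
            (fun x _ hx => if_neg (by simpa using hx))]
          exact Finset.sum_congr rfl fun i hi => if_pos (Finset.mem_range.1 hi)
  -- bound by rpow sum
  have hstep2 : (∑ i ∈ Finset.range (2*N), d i) ≤ ((2*N : ℕ):ℝ) ^ (1-α) / (1-α) := by
    calc (∑ i ∈ Finset.range (2*N), d i)
        ≤ ∑ i ∈ Finset.range (2*N), ((i:ℝ)+1) ^ (-α) :=
          Finset.sum_le_sum fun i _ => NegCes.ces_neg_le_rpow hα1 (le_of_lt hα0) i
      _ ≤ ((2*N : ℕ):ℝ) ^ (1-α) / (1-α) := NegCes.sum_rpow_le hα0 hα1 (2*N)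
  -- relation with vabs
  have hvl : 1/(N:ℝ) ≤ vabs m u := NegCes.vabs_lower hm hΛ ht
  have hvu : vabs m u ≤ (Λ:ℝ)/(N:ℝ) := NegCes.vabs_upper hm hΛ ht0
  have hvpos : 0 < vabs m u := lt_of_lt_of_le (by positivity) hvl
  have h2N : ((2*N : ℕ):ℝ) ≤ 2*(Λ:ℝ)/vabs m u := by
    push_cast
    rw [le_div_iff₀ hvpos]
    have : vabs m u * (N:ℝ) ≤ (Λ:ℝ) := by
      rw [div_eq_mul_inv] at hvu
      calc vabs m u * (N:ℝ) ≤ ((Λ:ℝ) * (N:ℝ)⁻¹) * (N:ℝ) :=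
            mul_le_mul_of_nonneg_right hvu (le_of_lt hNposR)
      _ = (Λ:ℝ) := by field_simp
    nlinarith
  have hrp : ((2*N : ℕ):ℝ) ^ (1-α) ≤ (2*(Λ:ℝ)) ^ (1-α) * vabs m u ^ (α-1) := by
    have h1 : ((2*N : ℕ):ℝ) ^ (1-α) ≤ (2*(Λ:ℝ)/vabs m u) ^ (1-α) :=
      Real.rpow_le_rpow (by positivity) h2N (by linarith)
    have h2 : (2*(Λ:ℝ)/vabs m u) ^ (1-α) = (2*(Λ:ℝ)) ^ (1-α) * vabs m u ^ (α-1) := by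
      rw [Real.div_rpow (by positivity) (le_of_lt hvpos), div_eq_mul_inv,
        ← Real.rpow_neg (le_of_lt hvpos)]
      congr 1
      ring
    rw [h2] at h1
    exact h1
  have hrp2 : (2*(Λ:ℝ)) ^ (1-α) ≤ 2*(Λ:ℝ) := by
    have := Real.rpow_le_rpow_of_exponent_le (by linarith : (1:ℝ) ≤ 2*(Λ:ℝ))
      (by linarith : 1 - α ≤ 1)
    rwa [Real.rpow_one] at this
  -- final assembly
  have hvpow : 0 < vabs m u ^ (α-1) := Real.rpow_pos_of_pos hvpos _
  have h1α : (0:ℝ) < 1 - α := by linarith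
  calc ‖∑ i ∈ Finset.Icc 1 n, ((ces (-α - 1) (n - i) : ℝ) : ℂ) * vD m i u‖
      = ‖∑ j ∈ Finset.range n, ((d j : ℝ) : ℂ) * ψ j‖ := by rw [hswap]
    _ ≤ d (n-1) * B n + ∑ i ∈ Finset.range (n-1), (d i - d (i+1)) * B (i+1) := hKbound
    _ = ∑ i ∈ Finset.range n, d i * χ i := hEq
    _ ≤ ∑ i ∈ Finset.range (2*N), d i := hchain
    _ ≤ ((2*N : ℕ):ℝ) ^ (1-α) / (1-α) := hstep2
    _ ≤ ((2*(Λ:ℝ)) ^ (1-α) * vabs m u ^ (α-1)) / (1-α) := by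
        exact div_le_div_of_nonneg_right hrp (le_of_lt h1α)
    _ ≤ (2*(Λ:ℝ) * vabs m u ^ (α-1)) / (1-α) := by
        exact div_le_div_of_nonneg_right (mul_le_mul_of_nonneg_right hrp2 (le_of_lt hvpow)) (le_of_lt h1α)
    _ = 2 * Λ / (1 - α) * vabs m u ^ (α - 1) := by ring
end
end

section
/- For α ∈ (0,1) and M_k ≤ n < M_{k+1}, one has ∑_{i=M_r}^{M_{r+1}−1} (n − M_{r+1} + 1)^{−α−2} · i ≤ C(α) M_r² M_k^{−α−2} for each 1 ≤ r ≤ k−2, and consequently M_k^α ∑_{r=1}^{k−2} ∑_{i=M_r}^{M_{r+1}−1} (n−i)^{−α−2} i ≤ C(α) ∑_{r=1}^{k−2} M_r / M_k. -/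
open MeasureTheory Finset
open scoped ENNReal NNReal

noncomputable section

lemma Mgen_pos (m : ℕ → ℕ) (hm : ∀ j, 2 ≤ m j) : ∀ k, 0 < Mgen m k
  | 0 => Nat.one_pos
  | k + 1 => by
      have := Mgen_pos m hm k
      have := hm k
      simp only [Mgen]
      positivity

lemma Mgen_mono (m : ℕ → ℕ) (hm : ∀ j, 2 ≤ m j) : Monotone (Mgen m) := by
  apply monotone_nat_of_le_succ
  intro k
  have h1 := Mgen_pos m hm k
  have h2 := hm k
  calc Mgen m k = 1 * Mgen m k := (one_mul _).symm
    _ ≤ m k * Mgen m k := Nat.mul_le_mul_right _ (by omega)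
    _ = Mgen m (k + 1) := rfl

/-- elementary estimates for the middle-frequency sums. -/
theorem middle_sum_estimates (α : ℝ) (hα : α ∈ Set.Ioo (0 : ℝ) 1) (Λ : ℕ) :
    ∃ C : ℝ, 0 < C ∧ ∀ (m : ℕ → ℕ), (∀ j, 2 ≤ m j) → (∀ j, m j ≤ Λ) →
      ∀ k n : ℕ, Mgen m k ≤ n → n < Mgen m (k + 1) →
      (∀ r : ℕ, 1 ≤ r → r ≤ k - 2 →
        ∑ i ∈ Finset.Ico (Mgen m r) (Mgen m (r + 1)),
            ((n - Mgen m (r + 1) + 1 : ℕ) : ℝ) ^ (-α - 2) * (i : ℝ) ≤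
          C * (Mgen m r : ℝ) ^ 2 * (Mgen m k : ℝ) ^ (-α - 2)) ∧
      (Mgen m k : ℝ) ^ α *
          ∑ r ∈ Finset.Icc 1 (k - 2), ∑ i ∈ Finset.Ico (Mgen m r) (Mgen m (r + 1)),
            ((n - i : ℕ) : ℝ) ^ (-α - 2) * (i : ℝ) ≤
        C * ∑ r ∈ Finset.Icc 1 (k - 2), (Mgen m r : ℝ) / (Mgen m k : ℝ) := by
  obtain ⟨hα0, hα1⟩ := hα
  set L : ℝ := max (Λ : ℝ) 2 with hLdef
  have hL2 : (2 : ℝ) ≤ L := le_max_right _ _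
  have hL0 : (0 : ℝ) < L := by linarith
  have hΛL : (Λ : ℝ) ≤ L := le_max_left _ _
  refine ⟨L ^ 2 * L ^ (α + 2), by positivity, ?_⟩
  intro m hm2 hmΛ k n hkn hnk
  have hMpos := Mgen_pos m hm2
  have hMmono := Mgen_mono m hm2
  -- first part
  have key : ∀ r : ℕ, 1 ≤ r → r ≤ k - 2 →
      ∑ i ∈ Finset.Ico (Mgen m r) (Mgen m (r + 1)),
          ((n - Mgen m (r + 1) + 1 : ℕ) : ℝ) ^ (-α - 2) * (i : ℝ) ≤
        (L ^ 2 * L ^ (α + 2)) * (Mgen m r : ℝ) ^ 2 * (Mgen m k : ℝ) ^ (-α - 2) := by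
    intro r hr1 hr2
    obtain ⟨k', rfl⟩ : ∃ k', k = k' + 3 := ⟨k - 3, by omega⟩
    have hMk : Mgen m (k' + 3) = m (k' + 2) * Mgen m (k' + 2) := rfl
    have hmk2 := hm2 (k' + 2)
    have hmkΛ := hmΛ (k' + 2)
    have hMr1 : Mgen m (r + 1) ≤ Mgen m (k' + 2) := hMmono (by omega)
    have h2M : 2 * Mgen m (k' + 2) ≤ Mgen m (k' + 3) := by
      rw [hMk]; exact Nat.mul_le_mul_right _ hmk2
    set x : ℕ := n - Mgen m (r + 1) + 1 with hxdef
    have hxge : Mgen m (k' + 2) + 1 ≤ x := by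
      have := hMpos (k' + 2); omega
    have hx0 : (0 : ℝ) < (x : ℝ) := by positivity
    have hMkx : Mgen m (k' + 3) ≤ Λ * x := by
      calc Mgen m (k' + 3) = m (k' + 2) * Mgen m (k' + 2) := hMk
        _ ≤ Λ * Mgen m (k' + 2) := Nat.mul_le_mul_right _ hmkΛ
        _ ≤ Λ * x := Nat.mul_le_mul_left _ (by omega)
    have hdiv : ((Mgen m (k' + 3) : ℝ)) / L ≤ (x : ℝ) := by
      rw [div_le_iff₀ hL0]
      calc (Mgen m (k' + 3) : ℝ) ≤ (Λ : ℝ) * x := by exact_mod_cast hMkx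
        _ ≤ L * x := by nlinarith
        _ = x * L := mul_comm _ _
    have hpow : ((x : ℝ)) ^ (-α - 2) ≤ L ^ (α + 2) * (Mgen m (k' + 3) : ℝ) ^ (-α - 2) := by
      have hdpos : (0 : ℝ) < (Mgen m (k' + 3) : ℝ) / L := by
        have := hMpos (k' + 3); positivity
      calc ((x : ℝ)) ^ (-α - 2) ≤ ((Mgen m (k' + 3) : ℝ) / L) ^ (-α - 2) :=
            Real.rpow_le_rpow_of_nonpos hdpos hdiv (by linarith)
        _ = (Mgen m (k' + 3) : ℝ) ^ (-α - 2) / L ^ (-α - 2) :=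
            Real.div_rpow (by positivity) hL0.le _
        _ = L ^ (α + 2) * (Mgen m (k' + 3) : ℝ) ^ (-α - 2) := by
            rw [show (-α - 2 : ℝ) = -(α + 2) by ring, Real.rpow_neg hL0.le,
              division_def, inv_inv]
            ring
    have hMr1L : (Mgen m (r + 1) : ℝ) ≤ L * Mgen m r := by
      have : Mgen m (r + 1) ≤ Λ * Mgen m r := by
        calc Mgen m (r + 1) = m r * Mgen m r := rfl
          _ ≤ Λ * Mgen m r := Nat.mul_le_mul_right _ (hmΛ r)
      calc (Mgen m (r + 1) : ℝ) ≤ (Λ : ℝ) * Mgen m r := by exact_mod_cast this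
        _ ≤ L * Mgen m r := by
            have := hMpos r
            have h0 : (0 : ℝ) ≤ (Mgen m r : ℝ) := by positivity
            nlinarith
    have hterm : ∀ i ∈ Finset.Ico (Mgen m r) (Mgen m (r + 1)),
        ((x : ℕ) : ℝ) ^ (-α - 2) * (i : ℝ) ≤
          (L ^ (α + 2) * (Mgen m (k' + 3) : ℝ) ^ (-α - 2)) * (L * Mgen m r) := by
      intro i hi
      rw [Finset.mem_Ico] at hi
      have hiL : (i : ℝ) ≤ L * Mgen m r := le_trans (by exact_mod_cast hi.2.le) hMr1L
      exact mul_le_mul hpow hiL (by positivity) (by positivity)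
    calc ∑ i ∈ Finset.Ico (Mgen m r) (Mgen m (r + 1)), ((x : ℕ) : ℝ) ^ (-α - 2) * (i : ℝ)
        ≤ ∑ _i ∈ Finset.Ico (Mgen m r) (Mgen m (r + 1)),
            (L ^ (α + 2) * (Mgen m (k' + 3) : ℝ) ^ (-α - 2)) * (L * Mgen m r) :=
          Finset.sum_le_sum hterm
      _ = ((Mgen m (r + 1) - Mgen m r : ℕ) : ℝ) *
            ((L ^ (α + 2) * (Mgen m (k' + 3) : ℝ) ^ (-α - 2)) * (L * Mgen m r)) := by
          rw [Finset.sum_const, Nat.card_Ico, nsmul_eq_mul]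
      _ ≤ (L * Mgen m r) *
            ((L ^ (α + 2) * (Mgen m (k' + 3) : ℝ) ^ (-α - 2)) * (L * Mgen m r)) := by
          apply mul_le_mul_of_nonneg_right _ (by positivity)
          calc ((Mgen m (r + 1) - Mgen m r : ℕ) : ℝ) ≤ (Mgen m (r + 1) : ℝ) := by
                exact_mod_cast Nat.sub_le _ _
            _ ≤ L * Mgen m r := hMr1L
      _ = (L ^ 2 * L ^ (α + 2)) * (Mgen m r : ℝ) ^ 2 * (Mgen m (k' + 3) : ℝ) ^ (-α - 2) := by
          ring
  refine ⟨key, ?_⟩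
  -- second part
  have hMk0 : (0 : ℝ) < (Mgen m k : ℝ) := by exact_mod_cast hMpos k
  have step1 : ∀ r ∈ Finset.Icc 1 (k - 2),
      ∑ i ∈ Finset.Ico (Mgen m r) (Mgen m (r + 1)),
          ((n - i : ℕ) : ℝ) ^ (-α - 2) * (i : ℝ) ≤
        (L ^ 2 * L ^ (α + 2)) * (Mgen m r : ℝ) ^ 2 * (Mgen m k : ℝ) ^ (-α - 2) := by
    intro r hr
    rw [Finset.mem_Icc] at hr
    refine le_trans (Finset.sum_le_sum ?_) (key r hr.1 hr.2)
    intro i hi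
    rw [Finset.mem_Ico] at hi
    have hMr1n : Mgen m (r + 1) ≤ n :=
      le_trans (hMmono (by omega)) hkn
    have hle : n - Mgen m (r + 1) + 1 ≤ n - i := by omega
    have hp : (0 : ℝ) < ((n - Mgen m (r + 1) + 1 : ℕ) : ℝ) := by positivity
    apply mul_le_mul_of_nonneg_right _ (by positivity)
    exact Real.rpow_le_rpow_of_nonpos hp (by exact_mod_cast hle) (by linarith)
  calc (Mgen m k : ℝ) ^ α *
        ∑ r ∈ Finset.Icc 1 (k - 2), ∑ i ∈ Finset.Ico (Mgen m r) (Mgen m (r + 1)),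
          ((n - i : ℕ) : ℝ) ^ (-α - 2) * (i : ℝ)
      ≤ (Mgen m k : ℝ) ^ α *
        ∑ r ∈ Finset.Icc 1 (k - 2),
          (L ^ 2 * L ^ (α + 2)) * (Mgen m r : ℝ) ^ 2 * (Mgen m k : ℝ) ^ (-α - 2) :=
        mul_le_mul_of_nonneg_left (Finset.sum_le_sum step1) (by positivity)
    _ = ∑ r ∈ Finset.Icc 1 (k - 2),
          (Mgen m k : ℝ) ^ α *
            ((L ^ 2 * L ^ (α + 2)) * (Mgen m r : ℝ) ^ 2 * (Mgen m k : ℝ) ^ (-α - 2)) :=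
        Finset.mul_sum _ _ _
    _ ≤ ∑ r ∈ Finset.Icc 1 (k - 2), (L ^ 2 * L ^ (α + 2)) * ((Mgen m r : ℝ) / Mgen m k) := by
        apply Finset.sum_le_sum
        intro r hr
        rw [Finset.mem_Icc] at hr
        have hrk : (Mgen m r : ℝ) ≤ Mgen m k := by exact_mod_cast hMmono (by omega)
        have hr0 : (0 : ℝ) < (Mgen m r : ℝ) := by exact_mod_cast hMpos r
        have hrw : (Mgen m k : ℝ) ^ α * (Mgen m k : ℝ) ^ (-α - 2) =
            ((Mgen m k : ℝ) ^ 2)⁻¹ := by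
          rw [← Real.rpow_add hMk0, show α + (-α - 2) = -(2 : ℕ) by push_cast; ring,
            Real.rpow_neg hMk0.le, Real.rpow_natCast]
        have hfrac : (Mgen m r : ℝ) ^ 2 * ((Mgen m k : ℝ) ^ 2)⁻¹ ≤
            (Mgen m r : ℝ) / Mgen m k := by
          rw [← div_eq_mul_inv, div_le_div_iff₀ (by positivity) hMk0]
          nlinarith [mul_le_mul_of_nonneg_right hrk (mul_nonneg hr0.le hMk0.le)]
        calc (Mgen m k : ℝ) ^ α *
              ((L ^ 2 * L ^ (α + 2)) * (Mgen m r : ℝ) ^ 2 * (Mgen m k : ℝ) ^ (-α - 2))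
            = (L ^ 2 * L ^ (α + 2)) *
                ((Mgen m r : ℝ) ^ 2 * ((Mgen m k : ℝ) ^ α * (Mgen m k : ℝ) ^ (-α - 2))) := by
              ring
          _ = (L ^ 2 * L ^ (α + 2)) * ((Mgen m r : ℝ) ^ 2 * ((Mgen m k : ℝ) ^ 2)⁻¹) := by
              rw [hrw]
          _ ≤ (L ^ 2 * L ^ (α + 2)) * ((Mgen m r : ℝ) / Mgen m k) :=
              mul_le_mul_of_nonneg_left hfrac (by positivity)
    _ = (L ^ 2 * L ^ (α + 2)) * ∑ r ∈ Finset.Icc 1 (k - 2), (Mgen m r : ℝ) / Mgen m k :=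
        (Finset.mul_sum _ _ _).symm
end
end
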